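/- arXiv:1506.08750 — 5 statements merged into one kernel-verified Lean document; each statement's English description precedes it below -/
import Mathlib

section
/- Every circular-arc graph is a B_3-EPG graph: if a finite simple graph G admits a circular-arc model, then G admits an EPG representation in which every path has at most 3 bends. -/
open SimpleGraph

/-- The circle, modeled as ℝ/ℤ. -/
abbrev ArcCircle : Type := AddCircle (1 : ℝ)

/-- A circular-arc model of a simple graph `G`: each vertex gets a nonempty open
arc (a proper, open, connected subset) of the circle, and distinct vertices are
adjacent iff their arcs intersect. -/
structure CAModel {V : Type*} (G : SimpleGraph V) where
  arc : V → Set ArcCircle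
  isOpen_arc : ∀ v, IsOpen (arc v)
  isConnected_arc : ∀ v, IsConnected (arc v)
  arc_ne_univ : ∀ v, arc v ≠ Set.univ
  adj_iff : ∀ u v, u ≠ v → (G.Adj u v ↔ (arc u ∩ arc v).Nonempty)

/-- A circular-arc model is normal if no two arcs together cover the circle. -/
def CAModel.Normal {V : Type*} {G : SimpleGraph V} (M : CAModel G) : Prop :=
  ∀ u v, M.arc u ∪ M.arc v ≠ Set.univ

/-- A circular-arc model is normal Helly if no set of at most three arcs covers
the whole circle. -/
def CAModel.NHCA {V : Type*} {G : SimpleGraph V} (M : CAModel G) : Prop :=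
  ∀ u v w, M.arc u ∪ M.arc v ∪ M.arc w ≠ Set.univ

/-- The grid graph on ℤ × ℤ: two points are adjacent iff they agree in one
coordinate and differ by exactly 1 in the other. -/
def gridGraph : SimpleGraph (ℤ × ℤ) where
  Adj p q := (p.1 = q.1 ∧ |p.2 - q.2| = 1) ∨ (p.2 = q.2 ∧ |p.1 - q.1| = 1)
  symm := by
    constructor
    rintro p q (⟨h1, h2⟩ | ⟨h1, h2⟩)
    · exact Or.inl ⟨h1.symm, by rwa [abs_sub_comm]⟩
    · exact Or.inr ⟨h1.symm, by rwa [abs_sub_comm]⟩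
  loopless := by constructor; rintro p (⟨_, h⟩ | ⟨_, h⟩) <;> simp at h

/-- A grid path: a simple path in the grid graph containing at least one edge. -/
structure GridPath where
  src : ℤ × ℤ
  dst : ℤ × ℤ
  walk : gridGraph.Walk src dst
  isPath : walk.IsPath
  pos_length : 1 ≤ walk.length

/-- The number of bends of a grid path: the number of internal vertices at which
one incident edge is horizontal and the other vertical, computed by comparing
the orientations of consecutive steps along the path. -/
def GridPath.bends (P : GridPath) : ℕ :=
  let verts := P.walk.support
  let steps := verts.zip verts.tail
  ((steps.zip steps.tail).filter
    (fun st => (st.1.1.1 == st.1.2.1) != (st.2.1.1 == st.2.2.1))).length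

/-- Two grid paths share an edge of the grid. -/
def GridPath.SharesEdge (P Q : GridPath) : Prop :=
  ∃ e, e ∈ P.walk.edges ∧ e ∈ Q.walk.edges

/-- An EPG representation of `G`: each vertex gets a grid path, and distinct
vertices are adjacent iff their paths share at least one grid edge. -/
structure EPGRep {V : Type*} (G : SimpleGraph V) where
  path : V → GridPath
  adj_iff : ∀ u v, u ≠ v → (G.Adj u v ↔ (path u).SharesEdge (path v))

/-- `G` is a `B_k`-EPG graph: it admits an EPG representation in which every
path has at most `k` bends. -/
def IsBkEPG {V : Type*} (G : SimpleGraph V) (k : ℕ) : Prop :=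
  ∃ rep : EPGRep G, ∀ v, (rep.path v).bends ≤ k

/-- The boundary of the axis-parallel rectangle of the grid determined by
columns `x1 < x2` and rows `y1 < y2`. -/
def rectBoundary (x1 x2 y1 y2 : ℤ) : Set (ℤ × ℤ) :=
  {p | ((p.1 = x1 ∨ p.1 = x2) ∧ y1 ≤ p.2 ∧ p.2 ≤ y2) ∨
       ((p.2 = y1 ∨ p.2 = y2) ∧ x1 ≤ p.1 ∧ p.1 ≤ x2)}

/-- An EPG representation is an EPR representation if the union of all the
paths is contained in the boundary of a single rectangle of the grid. -/
def EPGRep.InRectangle {V : Type*} {G : SimpleGraph V} (rep : EPGRep G) : Prop :=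
  ∃ x1 x2 y1 y2 : ℤ, x1 < x2 ∧ y1 < y2 ∧
    ∀ v, ∀ p ∈ (rep.path v).walk.support, p ∈ rectBoundary x1 x2 y1 y2

/-- `G` is a `B_k`-EPR graph: it admits an EPR representation in which every
path has at most `k` bends. -/
def IsBkEPR {V : Type*} (G : SimpleGraph V) (k : ℕ) : Prop :=
  ∃ rep : EPGRep G, rep.InRectangle ∧ ∀ v, (rep.path v).bends ≤ k

/-- Adjacency of the thick spider `S_n`: `inl` vertices form the clique,
`inr` vertices the stable set, and `c_i` is adjacent to `s_j` iff `i ≠ j`. -/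
def thickSpiderAdj (n : ℕ) : (Fin n ⊕ Fin n) → (Fin n ⊕ Fin n) → Prop
  | Sum.inl i, Sum.inl j => i ≠ j
  | Sum.inl i, Sum.inr j => i ≠ j
  | Sum.inr i, Sum.inl j => i ≠ j
  | Sum.inr _, Sum.inr _ => False

/-- The thick spider `S_n`. -/
def thickSpider (n : ℕ) : SimpleGraph (Fin n ⊕ Fin n) where
  Adj := thickSpiderAdj n
  symm := by
    constructor
    rintro (i | i) (j | j) h <;> simp only [thickSpiderAdj] at * <;> exact h.symm
  loopless := by constructor; rintro (i | i) h <;> simp [thickSpiderAdj] at h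

/-- Cyclic distance between `i` and `j` in `Fin n`: `min (|i-j|) (n - |i-j|)`. -/
def cycDist (n : ℕ) (i j : Fin n) : ℕ :=
  min ((i.val : ℤ) - (j.val : ℤ)).natAbs (n - ((i.val : ℤ) - (j.val : ℤ)).natAbs)

/-- The power of a cycle `C_n^k`: distinct vertices are adjacent iff their
cyclic distance is at most `k`. -/
def cyclePower (n k : ℕ) : SimpleGraph (Fin n) where
  Adj i j := i ≠ j ∧ cycDist n i j ≤ k
  symm := by
    constructor
    rintro i j ⟨h1, h2⟩
    refine ⟨h1.symm, ?_⟩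
    have : ((j.val : ℤ) - i.val).natAbs = ((i.val : ℤ) - j.val).natAbs := by
      rw [← Int.natAbs_neg, neg_sub]
    simpa [cycDist, this] using h2
  loopless := by constructor; rintro i ⟨h, _⟩; exact h rfl

/-- `H` is (isomorphic to) an induced subgraph of `G`. -/
def InducedSub {W V : Type*} (H : SimpleGraph W) (G : SimpleGraph V) : Prop :=
  Nonempty (H ↪g G)

/-- `G` is chordal: it contains no chordless cycle `C_m`, `m ≥ 4`, as an
induced subgraph. -/
def IsChordal {V : Type*} (G : SimpleGraph V) : Prop :=
  ∀ m : ℕ, 4 ≤ m → ¬ InducedSub (cyclePower m 1) G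

/-- `A` and `B` lie in different connected components of `G - X`. -/
def SeparatedIn {V : Type*} (G : SimpleGraph V) (X A B : Set V) : Prop :=
  ∀ (a b : V) (ha : a ∈ (Xᶜ : Set V)) (hb : b ∈ (Xᶜ : Set V)),
    a ∈ A → b ∈ B → ¬ (G.induce (Xᶜ : Set V)).Reachable ⟨a, ha⟩ ⟨b, hb⟩

/-- Four pairwise disjoint nonempty vertex sets `S 0, S 1, S 2, S 3` such that
`S 0` and `S 2` lie in different connected components of `G - (S 1 ∪ S 3)` and
`S 1` and `S 3` lie in different connected components of `G - (S 0 ∪ S 2)`. -/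
def FourSeparating {V : Type*} (G : SimpleGraph V) (S : Fin 4 → Set V) : Prop :=
  (∀ i j, i ≠ j → Disjoint (S i) (S j)) ∧
  (∀ i, (S i).Nonempty) ∧
  SeparatedIn G (S 1 ∪ S 3) (S 0) (S 2) ∧
  SeparatedIn G (S 0 ∪ S 2) (S 1) (S 3)

/-- A circular-arc model admits four points of the circle, each distinct from
every endpoint (frontier point) of every arc, such that no arc contains two of
these points. -/
def FourPointsProperty {V : Type*} {G : SimpleGraph V} (M : CAModel G) : Prop :=
  ∃ p : Fin 4 → ArcCircle, Function.Injective p ∧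
    (∀ i v, p i ∉ frontier (M.arc v)) ∧
    (∀ v i j, i ≠ j → ¬ (p i ∈ M.arc v ∧ p j ∈ M.arc v))


namespace CAB3

lemma adjH (x y : ℤ) : gridGraph.Adj (x, y) (x+1, y) := by
  right; constructor; rfl; simp

lemma adjH' {p q : ℤ × ℤ} (h2 : p.2 = q.2) (h1 : q.1 = p.1 + 1) : gridGraph.Adj p q := by
  right; exact ⟨h2, by rw [h1]; simp⟩

lemma adjV' {p q : ℤ × ℤ} (h1 : p.1 = q.1) (h2 : q.2 = p.2 + 1 ∨ q.2 = p.2 - 1) : gridGraph.Adj p q := by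
  left; refine ⟨h1, ?_⟩; rcases h2 with h | h <;> rw [h] <;> simp

def mkWalk (f : ℕ → ℤ × ℤ) : (n : ℕ) → (∀ i, i < n → gridGraph.Adj (f i) (f (i+1))) → gridGraph.Walk (f 0) (f n)
  | 0, _ => .nil
  | (n+1), h => (mkWalk f n fun i hi => h i (Nat.lt_succ_of_lt hi)).concat (h n n.lt_succ_self)

lemma mkWalk_support (f : ℕ → ℤ × ℤ) (n : ℕ) (h : ∀ i, i < n → gridGraph.Adj (f i) (f (i+1))) :
    (mkWalk f n h).support = (List.range (n+1)).map f := by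
  induction n with
  | zero => simp [mkWalk, List.range_succ]
  | succ n ih =>
    rw [mkWalk, Walk.support_concat, ih, List.range_succ (n := n+1)]
    simp

lemma mkWalk_edges (f : ℕ → ℤ × ℤ) (n : ℕ) (h : ∀ i, i < n → gridGraph.Adj (f i) (f (i+1))) :
    (mkWalk f n h).edges = (List.range n).map (fun i => s(f i, f (i+1))) := by
  induction n with
  | zero => simp [mkWalk]
  | succ n ih =>
    rw [mkWalk, Walk.edges_concat, ih, List.range_succ (n := n)]
    simp

lemma mkWalk_length (f : ℕ → ℤ × ℤ) (n : ℕ) (h : ∀ i, i < n → gridGraph.Adj (f i) (f (i+1))) :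
    (mkWalk f n h).length = n := by
  induction n with
  | zero => rfl
  | succ n ih => rw [mkWalk, Walk.length_concat, ih]

lemma mkWalk_isPath (f : ℕ → ℤ × ℤ) (n : ℕ) (h : ∀ i, i < n → gridGraph.Adj (f i) (f (i+1)))
    (hinj : ∀ i ≤ n, ∀ j ≤ n, f i = f j → i = j) : (mkWalk f n h).IsPath := by
  apply Walk.IsPath.mk'
  rw [mkWalk_support]
  apply List.Nodup.map_on
  · intro i hi j hj hf
    exact hinj i (by simpa using Nat.lt_succ_iff.mp (List.mem_range.mp hi))
      j (Nat.lt_succ_iff.mp (List.mem_range.mp hj)) hf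
  · exact List.nodup_range

lemma zip_tail_map_range {α : Type*} (f : ℕ → α) (n : ℕ) :
    (((List.range (n+1)).map f).zip ((List.range (n+1)).map f).tail)
      = (List.range n).map (fun i => (f i, f (i+1))) := by
  induction n generalizing f with
  | zero => simp [List.range_succ]
  | succ n ih =>
    have h2 : List.range (n+1) = 0 :: List.map Nat.succ (List.range n) := List.range_succ_eq_map (n := n)
    rw [List.range_succ_eq_map (n := n+1)]
    rw [h2]
    have := ih (fun i => f (i+1))
    rw [h2] at this
    simp only [List.map_cons, List.map_map, Function.comp_def, List.zip_cons_cons,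
      List.tail_cons, Nat.succ_eq_add_one] at this ⊢
    rw [this]



lemma countP_range_le (q : ℕ → Bool) (m : ℕ) (S : Finset ℕ)
    (h : ∀ i, i < m → q i = true → i ∈ S) : (List.range m).countP q ≤ S.card := by
  rw [List.countP_eq_length_filter]
  have hnd : ((List.range m).filter q).Nodup := (List.nodup_range (n := m)).filter _
  rw [← List.toFinset_card_of_nodup hnd]
  apply Finset.card_le_card
  intro a ha
  rw [List.mem_toFinset, List.mem_filter, List.mem_range] at ha
  exact h a ha.1 ha.2

def bendAt (f : ℕ → ℤ × ℤ) (i : ℕ) : Bool :=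
  ((f i).1 == (f (i+1)).1) != ((f (i+1)).1 == (f (i+2)).1)

lemma bends_le (P : GridPath) (f : ℕ → ℤ × ℤ) (n : ℕ)
    (hs : P.walk.support = (List.range (n+1)).map f)
    (S : Finset ℕ) (hS : ∀ i, i+1 < n → bendAt f i = true → i ∈ S) :
    P.bends ≤ S.card := by
  unfold GridPath.bends
  simp only [hs, zip_tail_map_range]
  set F : ℕ → (ℤ×ℤ) × (ℤ×ℤ) := fun i => (f i, f (i+1)) with hF
  have hz : ((List.range n).map F).zip ((List.range n).map F).tail
      = (List.range (n-1)).map (fun i => (F i, F (i+1))) := by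
    cases n with
    | zero => simp
    | succ m => simpa using zip_tail_map_range F m
  rw [hz, List.filter_map, List.length_map, ← List.countP_eq_length_filter]
  apply countP_range_le
  intro i hi hq
  exact hS i (by omega) (by simpa [bendAt, hF] using hq)

lemma grid_adj_iff (p q : ℤ × ℤ) : gridGraph.Adj p q ↔
    (p.1 = q.1 ∧ (p.2 - q.2 = 1 ∨ q.2 - p.2 = 1)) ∨
    (p.2 = q.2 ∧ (p.1 - q.1 = 1 ∨ q.1 - p.1 = 1)) := by
  show (p.1 = q.1 ∧ |p.2 - q.2| = 1) ∨ (p.2 = q.2 ∧ |p.1 - q.1| = 1) ↔ _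
  constructor
  · rintro (⟨h1, h2⟩ | ⟨h1, h2⟩) <;> rcases abs_eq (by norm_num : (0:ℤ) ≤ 1) |>.mp h2 with h | h
    · exact Or.inl ⟨h1, Or.inl h⟩
    · exact Or.inl ⟨h1, Or.inr (by omega)⟩
    · exact Or.inr ⟨h1, Or.inl h⟩
    · exact Or.inr ⟨h1, Or.inr (by omega)⟩
  · rintro (⟨h1, h2⟩ | ⟨h1, h2⟩)
    · exact Or.inl ⟨h1, by rcases h2 with h | h <;> rw [abs_eq (by norm_num : (0:ℤ) ≤ 1)] <;> omega⟩
    · exact Or.inr ⟨h1, by rcases h2 with h | h <;> rw [abs_eq (by norm_num : (0:ℤ) ≤ 1)] <;> omega⟩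

def nwF (N L R : ℕ) : ℕ → ℤ × ℤ := fun i =>
  if i ≤ R - L then ((L : ℤ) + i, 0)
  else if i ≤ R + 1 then ((R : ℤ), (R : ℤ) - L - i)
  else if i ≤ N + 2 then ((i : ℤ) - 1, -((L : ℤ) + 1))
  else ((N : ℤ) + 1, -(L : ℤ))

def wF (N A : ℕ) : ℕ → ℤ × ℤ := fun i =>
  if i ≤ N + 1 - A then ((A : ℤ) + i, 0)
  else ((N : ℤ) + 1, ((N : ℤ) + 1 - A) - i)

lemma nw_step {N L R : ℕ} (h1 : 1 ≤ L) (h2 : L < R) (h3 : R ≤ N) (i : ℕ) (hi : i < N + 3) :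
    (i < R - L ∧ nwF N L R i = ((L:ℤ)+i, 0) ∧ nwF N L R (i+1) = ((L:ℤ)+i+1, 0)) ∨
    (R - L ≤ i ∧ i < R + 1 ∧ nwF N L R i = ((R:ℤ), (R:ℤ)-L-i) ∧ nwF N L R (i+1) = ((R:ℤ), (R:ℤ)-L-i-1)) ∨
    (R + 1 ≤ i ∧ i < N+2 ∧ nwF N L R i = ((i:ℤ)-1, -((L:ℤ)+1)) ∧ nwF N L R (i+1) = ((i:ℤ), -((L:ℤ)+1))) ∨
    (i = N+2 ∧ nwF N L R i = ((N:ℤ)+1, -((L:ℤ)+1)) ∧ nwF N L R (i+1) = ((N:ℤ)+1, -(L:ℤ))) := by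
  unfold nwF
  split_ifs <;>
    simp only [Prod.mk.injEq, and_true, true_and] <;>
    omega

lemma w_step {N A B : ℕ} (h1 : 1 ≤ A) (h2 : A ≤ N) (h3 : 1 ≤ B) (i : ℕ) (hi : i < (N + 1 - A) + B) :
    (i < N + 1 - A ∧ wF N A i = ((A:ℤ)+i, 0) ∧ wF N A (i+1) = ((A:ℤ)+i+1, 0)) ∨
    (N + 1 - A ≤ i ∧ wF N A i = ((N:ℤ)+1, ((N:ℤ)+1-A)-i) ∧ wF N A (i+1) = ((N:ℤ)+1, ((N:ℤ)+1-A)-i-1)) := by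
  unfold wF
  split_ifs <;> simp only [Prod.mk.injEq, and_true, true_and] <;> omega





lemma bendAt_true_iff (f : ℕ → ℤ × ℤ) (i : ℕ) :
    bendAt f i = true ↔ ¬((f i).1 = (f (i+1)).1 ↔ (f (i+1)).1 = (f (i+2)).1) := by
  unfold bendAt
  by_cases hxy : (f i).1 = (f (i+1)).1 <;> by_cases hzw : (f (i+1)).1 = (f (i+2)).1 <;>
    simp [hxy, hzw]

lemma nw_adj {N L R : ℕ} (h1 : 1 ≤ L) (h2 : L < R) (h3 : R ≤ N) :
    ∀ i, i < N + 3 → gridGraph.Adj (nwF N L R i) (nwF N L R (i+1)) := by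
  intro i hi
  rcases nw_step h1 h2 h3 i hi with ⟨h, e1, e2⟩ | ⟨h, h', e1, e2⟩ | ⟨h, h', e1, e2⟩ | ⟨h, e1, e2⟩ <;>
    rw [grid_adj_iff, e1, e2] <;> dsimp only <;> omega

lemma w_adj {N A B : ℕ} (h1 : 1 ≤ A) (h2 : A ≤ N) (h3 : 1 ≤ B) :
    ∀ i, i < (N + 1 - A) + B → gridGraph.Adj (wF N A i) (wF N A (i+1)) := by
  intro i hi
  rcases w_step h1 h2 h3 i hi with ⟨h, e1, e2⟩ | ⟨h, e1, e2⟩ <;>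
    rw [grid_adj_iff, e1, e2] <;> dsimp only <;> omega

lemma nw_inj {N L R : ℕ} (h1 : 1 ≤ L) (h2 : L < R) (h3 : R ≤ N) :
    ∀ i ≤ N+3, ∀ j ≤ N+3, nwF N L R i = nwF N L R j → i = j := by
  intro i hi j hj hf
  unfold nwF at hf
  split_ifs at hf <;> simp only [Prod.mk.injEq, and_true, true_and] at hf <;> omega

lemma w_inj {N A B : ℕ} (h1 : 1 ≤ A) (h2 : A ≤ N) (h3 : 1 ≤ B) :
    ∀ i ≤ (N + 1 - A) + B, ∀ j ≤ (N + 1 - A) + B, wF N A i = wF N A j → i = j := by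
  intro i hi j hj hf
  unfold wF at hf
  split_ifs at hf <;> simp only [Prod.mk.injEq, and_true, true_and] at hf <;> omega

lemma nw_bend_mem {N L R : ℕ} (h1 : 1 ≤ L) (h2 : L < R) (h3 : R ≤ N) :
    ∀ i, i + 1 < N + 3 → bendAt (nwF N L R) i = true → i ∈ ({R-L-1, R, N+1} : Finset ℕ) := by
  intro i hi hb
  rw [bendAt_true_iff] at hb
  suffices hgoal : i = R-L-1 ∨ i = R ∨ i = N+1 by
    simp only [Finset.mem_insert, Finset.mem_singleton]; tauto
  rcases nw_step h1 h2 h3 i (by omega) with ⟨h, e1, e2⟩ | ⟨h, h', e1, e2⟩ | ⟨h, h', e1, e2⟩ | ⟨h, e1, e2⟩ <;>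
    rcases nw_step h1 h2 h3 (i+1) (by omega) with ⟨g, g1, g2⟩ | ⟨g, g', g1, g2⟩ | ⟨g, g', g1, g2⟩ | ⟨g, g1, g2⟩ <;>
    rw [e1, e2, g2] at hb <;> dsimp only at hb <;> omega

lemma w_bend_mem {N A B : ℕ} (h1 : 1 ≤ A) (h2 : A ≤ N) (h3 : 1 ≤ B) :
    ∀ i, i + 1 < (N + 1 - A) + B → bendAt (wF N A) i = true → i ∈ ({N - A} : Finset ℕ) := by
  intro i hi hb
  rw [bendAt_true_iff] at hb
  suffices hgoal : i = N - A by simp [hgoal]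
  rcases w_step h1 h2 h3 i (by omega) with ⟨h, e1, e2⟩ | ⟨h, e1, e2⟩ <;>
    rcases w_step h1 h2 h3 (i+1) (by omega) with ⟨g, g1, g2⟩ | ⟨g, g1, g2⟩ <;>
    rw [e1, e2, g2] at hb <;> dsimp only at hb <;> omega

lemma nw_nw_share {N L1 R1 L2 R2 : ℕ} (a1 : 1 ≤ L1) (a2 : L1 < R1) (a3 : R1 ≤ N)
    (b1 : 1 ≤ L2) (b2 : L2 < R2) (b3 : R2 ≤ N) {i j : ℕ} (hi : i < N+3) (hj : j < N+3)
    (he : s(nwF N L1 R1 i, nwF N L1 R1 (i+1)) = s(nwF N L2 R2 j, nwF N L2 R2 (j+1))) :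
    L1 < R2 ∧ L2 < R1 := by
  rcases nw_step a1 a2 a3 i hi with ⟨h, e1, e2⟩ | ⟨h, h', e1, e2⟩ | ⟨h, h', e1, e2⟩ | ⟨h, e1, e2⟩ <;>
    rcases nw_step b1 b2 b3 j hj with ⟨g, g1, g2⟩ | ⟨g, g', g1, g2⟩ | ⟨g, g', g1, g2⟩ | ⟨g, g1, g2⟩ <;>
    rw [e1, e2, g1, g2, Sym2.eq_iff] at he <;>
    simp only [Prod.mk.injEq, and_true, true_and] at he <;> omega

lemma nw_w_share {N L R A B : ℕ} (a1 : 1 ≤ L) (a2 : L < R) (a3 : R ≤ N)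
    (b1 : 1 ≤ A) (b2 : A ≤ N) (b3 : 1 ≤ B) {i j : ℕ} (hi : i < N+3) (hj : j < (N+1-A)+B)
    (he : s(nwF N L R i, nwF N L R (i+1)) = s(wF N A j, wF N A (j+1))) :
    A < R ∨ L < B := by
  rcases nw_step a1 a2 a3 i hi with ⟨h, e1, e2⟩ | ⟨h, h', e1, e2⟩ | ⟨h, h', e1, e2⟩ | ⟨h, e1, e2⟩ <;>
    rcases w_step b1 b2 b3 j hj with ⟨g, g1, g2⟩ | ⟨g, g1, g2⟩ <;>
    rw [e1, e2, g1, g2, Sym2.eq_iff] at he <;>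
    simp only [Prod.mk.injEq, and_true, true_and] at he <;> omega

lemma nw_nw_make {N L1 R1 L2 R2 : ℕ} (a1 : 1 ≤ L1) (a2 : L1 < R1) (a3 : R1 ≤ N)
    (b1 : 1 ≤ L2) (b2 : L2 < R2) (b3 : R2 ≤ N) (c1 : L1 < R2) (c2 : L2 < R1) :
    ∃ i < N+3, ∃ j < N+3,
      s(nwF N L1 R1 i, nwF N L1 R1 (i+1)) = s(nwF N L2 R2 j, nwF N L2 R2 (j+1)) := by
  set t := max L1 L2 with ht
  refine ⟨t - L1, by omega, t - L2, by omega, ?_⟩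
  rcases nw_step a1 a2 a3 (t - L1) (by omega) with ⟨h, e1, e2⟩ | ⟨h, h', e1, e2⟩ | ⟨h, h', e1, e2⟩ | ⟨h, e1, e2⟩ <;>
    [skip; omega; omega; omega]
  rcases nw_step b1 b2 b3 (t - L2) (by omega) with ⟨g, g1, g2⟩ | ⟨g, g', g1, g2⟩ | ⟨g, g', g1, g2⟩ | ⟨g, g1, g2⟩ <;>
    [skip; omega; omega; omega]
  rw [e1, e2, g1, g2]
  have : ((L1:ℤ) + (t - L1 : ℕ)) = ((L2:ℤ) + (t - L2 : ℕ)) := by omega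
  rw [Sym2.eq_iff]
  left
  constructor <;> rw [Prod.mk.injEq] <;> constructor <;> omega

lemma nw_w_make_h {N L R A B : ℕ} (a1 : 1 ≤ L) (a2 : L < R) (a3 : R ≤ N)
    (b1 : 1 ≤ A) (b2 : A ≤ N) (b3 : 1 ≤ B) (c : A < R) :
    ∃ i < N+3, ∃ j < (N+1-A)+B,
      s(nwF N L R i, nwF N L R (i+1)) = s(wF N A j, wF N A (j+1)) := by
  set t := max L A with ht
  refine ⟨t - L, by omega, t - A, by omega, ?_⟩
  rcases nw_step a1 a2 a3 (t - L) (by omega) with ⟨h, e1, e2⟩ | ⟨h, h', e1, e2⟩ | ⟨h, h', e1, e2⟩ | ⟨h, e1, e2⟩ <;>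
    [skip; omega; omega; omega]
  rcases w_step b1 b2 b3 (t - A) (by omega) with ⟨g, g1, g2⟩ | ⟨g, g1, g2⟩ <;> [skip; omega]
  rw [e1, e2, g1, g2, Sym2.eq_iff]
  left
  constructor <;> rw [Prod.mk.injEq] <;> constructor <;> omega

lemma nw_w_make_v {N L R A B : ℕ} (a1 : 1 ≤ L) (a2 : L < R) (a3 : R ≤ N)
    (b1 : 1 ≤ A) (b2 : A ≤ N) (b3 : 1 ≤ B) (c : L < B) :
    ∃ i < N+3, ∃ j < (N+1-A)+B,
      s(nwF N L R i, nwF N L R (i+1)) = s(wF N A j, wF N A (j+1)) := by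
  refine ⟨N+2, by omega, (N+1-A) + L, by omega, ?_⟩
  rcases nw_step a1 a2 a3 (N+2) (by omega) with ⟨h, e1, e2⟩ | ⟨h, h', e1, e2⟩ | ⟨h, h', e1, e2⟩ | ⟨h, e1, e2⟩ <;>
    [omega; omega; omega; skip]
  rcases w_step b1 b2 b3 ((N+1-A)+L) (by omega) with ⟨g, g1, g2⟩ | ⟨g, g1, g2⟩ <;> [omega; skip]
  rw [e1, e2, g1, g2, Sym2.eq_iff]
  right
  constructor <;> rw [Prod.mk.injEq] <;> constructor <;> omega

lemma w_w_make {N A1 B1 A2 B2 : ℕ} (b1 : 1 ≤ A1) (b2 : A1 ≤ N) (b3 : 1 ≤ B1)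
    (c1 : 1 ≤ A2) (c2 : A2 ≤ N) (c3 : 1 ≤ B2) :
    ∃ i < (N+1-A1)+B1, ∃ j < (N+1-A2)+B2,
      s(wF N A1 i, wF N A1 (i+1)) = s(wF N A2 j, wF N A2 (j+1)) := by
  refine ⟨N - A1, by omega, N - A2, by omega, ?_⟩
  rcases w_step b1 b2 b3 (N - A1) (by omega) with ⟨g, g1, g2⟩ | ⟨g, g1, g2⟩ <;> [skip; omega]
  rcases w_step c1 c2 c3 (N - A2) (by omega) with ⟨f, f1, f2⟩ | ⟨f, f1, f2⟩ <;> [skip; omega]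
  rw [g1, g2, f1, f2, Sym2.eq_iff]
  left
  constructor <;> rw [Prod.mk.injEq] <;> constructor <;> omega




def nwPath (N L R : ℕ) (h1 : 1 ≤ L) (h2 : L < R) (h3 : R ≤ N) : GridPath where
  src := nwF N L R 0
  dst := nwF N L R (N+3)
  walk := mkWalk (nwF N L R) (N+3) (nw_adj h1 h2 h3)
  isPath := mkWalk_isPath _ _ _ (nw_inj h1 h2 h3)
  pos_length := by rw [mkWalk_length]; omega

def wPath (N A B : ℕ) (h1 : 1 ≤ A) (h2 : A ≤ N) (h3 : 1 ≤ B) : GridPath where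
  src := wF N A 0
  dst := wF N A ((N+1-A)+B)
  walk := mkWalk (wF N A) ((N+1-A)+B) (w_adj h1 h2 h3)
  isPath := mkWalk_isPath _ _ _ (w_inj h1 h2 h3)
  pos_length := by rw [mkWalk_length]; omega

lemma card_le_three (a b c : ℕ) : ({a, b, c} : Finset ℕ).card ≤ 3 := by
  apply le_trans (Finset.card_insert_le _ _)
  have : ({b, c} : Finset ℕ).card ≤ 2 := by
    apply le_trans (Finset.card_insert_le _ _); simp
  omega

lemma nwPath_bends {N L R : ℕ} (h1 : 1 ≤ L) (h2 : L < R) (h3 : R ≤ N) :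
    (nwPath N L R h1 h2 h3).bends ≤ 3 := by
  refine le_trans (bends_le _ (nwF N L R) (N+3) (mkWalk_support _ _ _)
    ({R-L-1, R, N+1} : Finset ℕ) ?_) (card_le_three _ _ _)
  intro i hi hb
  exact nw_bend_mem h1 h2 h3 i hi hb

lemma wPath_bends {N A B : ℕ} (h1 : 1 ≤ A) (h2 : A ≤ N) (h3 : 1 ≤ B) :
    (wPath N A B h1 h2 h3).bends ≤ 3 := by
  refine le_trans (bends_le _ (wF N A) ((N+1-A)+B) (mkWalk_support _ _ _)
    ({N-A} : Finset ℕ) ?_) (by simp)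
  intro i hi hb
  exact w_bend_mem h1 h2 h3 i hi hb

lemma sharesEdge_iff {P Q : GridPath} {f g : ℕ → ℤ × ℤ} {m n : ℕ}
    (hP : P.walk.edges = (List.range m).map (fun i => s(f i, f (i+1))))
    (hQ : Q.walk.edges = (List.range n).map (fun j => s(g j, g (j+1)))) :
    P.SharesEdge Q ↔ ∃ i < m, ∃ j < n, s(f i, f (i+1)) = s(g j, g (j+1)) := by
  unfold GridPath.SharesEdge
  rw [hP, hQ]
  constructor
  · rintro ⟨e, he1, he2⟩
    rw [List.mem_map] at he1 he2
    obtain ⟨i, hi, rfl⟩ := he1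
    obtain ⟨j, hj, hij⟩ := he2
    exact ⟨i, List.mem_range.mp hi, j, List.mem_range.mp hj, hij.symm⟩
  · rintro ⟨i, hi, j, hj, hij⟩
    exact ⟨s(f i, f (i+1)), List.mem_map.mpr ⟨i, List.mem_range.mpr hi, rfl⟩,
      List.mem_map.mpr ⟨j, List.mem_range.mpr hj, hij.symm ▸ rfl⟩⟩

lemma nwPath_shares_nwPath {N L1 R1 L2 R2 : ℕ} (a1 : 1 ≤ L1) (a2 : L1 < R1) (a3 : R1 ≤ N)
    (b1 : 1 ≤ L2) (b2 : L2 < R2) (b3 : R2 ≤ N) :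
    (nwPath N L1 R1 a1 a2 a3).SharesEdge (nwPath N L2 R2 b1 b2 b3) ↔ (L1 < R2 ∧ L2 < R1) := by
  rw [sharesEdge_iff (mkWalk_edges _ _ _) (mkWalk_edges _ _ _)]
  constructor
  · rintro ⟨i, hi, j, hj, he⟩
    exact nw_nw_share a1 a2 a3 b1 b2 b3 hi hj he
  · rintro ⟨c1, c2⟩
    exact nw_nw_make a1 a2 a3 b1 b2 b3 c1 c2

lemma nwPath_shares_wPath {N L R A B : ℕ} (a1 : 1 ≤ L) (a2 : L < R) (a3 : R ≤ N)
    (b1 : 1 ≤ A) (b2 : A ≤ N) (b3 : 1 ≤ B) :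
    (nwPath N L R a1 a2 a3).SharesEdge (wPath N A B b1 b2 b3) ↔ (A < R ∨ L < B) := by
  rw [sharesEdge_iff (mkWalk_edges _ _ _) (mkWalk_edges _ _ _)]
  constructor
  · rintro ⟨i, hi, j, hj, he⟩
    exact nw_w_share a1 a2 a3 b1 b2 b3 hi hj he
  · rintro (c | c)
    · exact nw_w_make_h a1 a2 a3 b1 b2 b3 c
    · exact nw_w_make_v a1 a2 a3 b1 b2 b3 c

lemma wPath_shares_wPath {N A1 B1 A2 B2 : ℕ} (b1 : 1 ≤ A1) (b2 : A1 ≤ N) (b3 : 1 ≤ B1)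
    (c1 : 1 ≤ A2) (c2 : A2 ≤ N) (c3 : 1 ≤ B2) :
    (wPath N A1 B1 b1 b2 b3).SharesEdge (wPath N A2 B2 c1 c2 c3) := by
  rw [sharesEdge_iff (mkWalk_edges _ _ _) (mkWalk_edges _ _ _)]
  exact w_w_make b1 b2 b3 c1 c2 c3

lemma sharesEdge_symm {P Q : GridPath} (h : P.SharesEdge Q) : Q.SharesEdge P := by
  obtain ⟨e, h1, h2⟩ := h; exact ⟨e, h2, h1⟩

end CAB3

open SimpleGraph Set
namespace CAB3

lemma coe_eq_coe (s t : ℝ) : (s : ArcCircle) = (t : ArcCircle) ↔ ∃ k : ℤ, s = t + k := by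
  constructor
  · intro h
    obtain ⟨k, hk⟩ := AddSubgroup.mem_zmultiples_iff.mp (QuotientAddGroup.eq.mp h)
    rw [zsmul_eq_mul, mul_one] at hk
    exact ⟨-k, by push_cast; linarith⟩
  · rintro ⟨k, rfl⟩
    apply QuotientAddGroup.eq.mpr
    rw [AddSubgroup.mem_zmultiples_iff]
    exact ⟨-k, by rw [zsmul_eq_mul, mul_one]; push_cast; ring⟩

lemma continuous_qc : Continuous (fun r : ℝ => (r : ArcCircle)) := AddCircle.continuous_mk' 1

lemma isOpenMap_qc : IsOpenMap (fun r : ℝ => (r : ArcCircle)) := QuotientAddGroup.isOpenMap_coe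

lemma mem_image_Ioo (t a b : ℝ) :
    (t : ArcCircle) ∈ (fun r : ℝ => (r : ArcCircle)) '' Set.Ioo a b ↔
      ∃ k : ℤ, t + k ∈ Set.Ioo a b := by
  constructor
  · rintro ⟨u, hu, he⟩
    obtain ⟨k, hk⟩ := (coe_eq_coe u t).mp he
    exact ⟨k, hk ▸ hu⟩
  · rintro ⟨k, hk⟩
    exact ⟨t + k, hk, ((coe_eq_coe (t + k) t).mpr ⟨k, rfl⟩)⟩

lemma arc_param {S : Set ArcCircle} (hO : IsOpen S) (hC : IsConnected S) (hP : S ≠ Set.univ) :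
    ∃ a b : ℝ, 0 < b - a ∧ b - a ≤ 1 ∧ S = (fun r : ℝ => (r : ArcCircle)) '' Set.Ioo a b := by
  have : ∃ z, z ∉ S := by
    by_contra hz; push_neg at hz; exact hP (Set.eq_univ_of_forall hz)
  obtain ⟨z, hz⟩ := this
  obtain ⟨x, rfl⟩ := QuotientAddGroup.mk_surjective z
  set e : ℝ → ArcCircle := fun t => ((x + t : ℝ) : ArcCircle) with he
  have hxz : (QuotientAddGroup.mk x : ArcCircle) = ((x:ℝ) : ArcCircle) := rfl
  have hecont : Continuous e := continuous_qc.comp (continuous_const.add continuous_id)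
  have heopen : IsOpenMap e :=
    IsOpenMap.comp isOpenMap_qc (Homeomorph.addLeft x).isOpenMap
  have heinj : ∀ s ∈ Set.Ioo (0:ℝ) 1, ∀ t ∈ Set.Ioo (0:ℝ) 1, e s = e t → s = t := by
    intro s hs t ht hst
    obtain ⟨k, hk⟩ := (coe_eq_coe (x + s) (x + t)).mp hst
    rcases hs with ⟨hs0, hs1⟩; rcases ht with ⟨ht0, ht1⟩
    have h1 : (k:ℝ) < 1 := by linarith
    have h2 : (-1:ℝ) < k := by linarith
    have h1' : k < 1 := by exact_mod_cast h1
    have h2' : -1 < k := by exact_mod_cast h2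
    have : k = 0 := by omega
    rw [this] at hk; push_cast at hk; linarith
  -- image of the interval is the complement of the basepoint
  have himg : e '' Set.Ioo 0 1 = {(QuotientAddGroup.mk x : ArcCircle)}ᶜ := by
    apply Set.eq_of_subset_of_subset
    · rintro _ ⟨t, ht, rfl⟩
      simp only [Set.mem_compl_iff, Set.mem_singleton_iff]
      intro hc
      rw [hxz] at hc
      obtain ⟨k, hk⟩ := (coe_eq_coe (x + t) x).mp hc
      rcases ht with ⟨ht0, ht1⟩
      have h1' : (k:ℝ) < 1 := by linarith
      have h2' : (0:ℝ) < k := by linarith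
      have : k < 1 := by exact_mod_cast h1'
      have : 0 < k := by exact_mod_cast h2'
      omega
    · intro w hw
      obtain ⟨r, rfl⟩ := QuotientAddGroup.mk_surjective w
      set t := Int.fract (r - x) with htdef
      have ht1 : t < 1 := Int.fract_lt_one _
      have ht0 : 0 ≤ t := Int.fract_nonneg _
      have het : e t = QuotientAddGroup.mk r := by
        show ((x + t : ℝ) : ArcCircle) = _
        have : (QuotientAddGroup.mk r : ArcCircle) = ((r:ℝ) : ArcCircle) := rfl
        rw [this]
        apply (coe_eq_coe _ _).mpr
        exact ⟨-⌊r - x⌋, by push_cast; rw [htdef, Int.fract]; ring⟩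
      have htne : t ≠ 0 := by
        intro h0
        apply hw
        rw [← het, h0]
        show ((x + 0 : ℝ) : ArcCircle) ∈ _
        rw [add_zero]
        exact rfl
      exact ⟨t, ⟨lt_of_le_of_ne ht0 (Ne.symm htne), ht1⟩, het⟩
  set T : Set ℝ := e ⁻¹' S ∩ Set.Ioo 0 1 with hT
  have hTsub : T ⊆ Set.Ioo 0 1 := Set.inter_subset_right
  have hST : S = e '' T := by
    rw [hT, Set.inter_comm, Set.image_inter_preimage, himg]
    rw [Set.inter_comm]
    apply Set.eq_of_subset_of_subset
    · intro w hw
      refine ⟨hw, ?_⟩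
      simp only [Set.mem_compl_iff, Set.mem_singleton_iff]
      rintro rfl; exact hz hw
    · exact Set.inter_subset_left
  have hTopen : IsOpen T := (hO.preimage hecont).inter isOpen_Ioo
  have hTne : T.Nonempty := by
    rcases hC.nonempty with ⟨w, hw⟩
    rw [hST] at hw; rcases hw with ⟨t, ht, _⟩; exact ⟨t, ht⟩
  -- order-connectedness of T
  have hord : ∀ s ∈ T, ∀ t ∈ T, ∀ u, s < u → u < t → u ∈ T := by
    intro s hs t ht u hsu hut
    by_contra hu
    have hu01 : u ∈ Set.Ioo (0:ℝ) 1 := ⟨lt_trans (hTsub hs).1 hsu, lt_trans hut (hTsub ht).2⟩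
    have hUS : e u ∉ S := fun hus => hu ⟨hus, hu01⟩
    have hU1 : IsOpen (e '' Set.Ioo 0 u) := heopen _ isOpen_Ioo
    have hU2 : IsOpen (e '' Set.Ioo u 1) := heopen _ isOpen_Ioo
    have hcover : S ⊆ e '' Set.Ioo 0 u ∪ e '' Set.Ioo u 1 := by
      intro w hw
      rw [hST] at hw
      rcases hw with ⟨r, hr, rfl⟩
      have hr01 := hTsub hr
      have : r ≠ u := fun h => hu (h ▸ hr)
      rcases lt_or_gt_of_ne this with h | h
      · exact Or.inl ⟨r, ⟨hr01.1, h⟩, rfl⟩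
      · exact Or.inr ⟨r, ⟨h, hr01.2⟩, rfl⟩
    have hne1 : (S ∩ e '' Set.Ioo 0 u).Nonempty :=
      ⟨e s, by rw [hST]; exact ⟨s, hs, rfl⟩, ⟨s, ⟨(hTsub hs).1, hsu⟩, rfl⟩⟩
    have hne2 : (S ∩ e '' Set.Ioo u 1).Nonempty :=
      ⟨e t, by rw [hST]; exact ⟨t, ht, rfl⟩, ⟨t, ⟨hut, (hTsub ht).2⟩, rfl⟩⟩
    obtain ⟨w, _, ⟨r1, hr1, hw1⟩, ⟨r2, hr2, hw2⟩⟩ :=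
      hC.isPreconnected _ _ hU1 hU2 hcover hne1 hne2
    have : r1 = r2 := by
      apply heinj r1 ⟨hr1.1, lt_trans hr1.2 hu01.2⟩ r2 ⟨lt_trans hu01.1 hr2.1, hr2.2⟩
      rw [hw1, hw2]
    linarith [hr1.2, hr2.1]
  have hbddB : BddBelow T := ⟨0, fun r hr => le_of_lt (hTsub hr).1⟩
  have hbddA : BddAbove T := ⟨1, fun r hr => le_of_lt (hTsub hr).2⟩
  set A := sInf T with hA
  set B := sSup T with hB
  have hTIoo : T = Set.Ioo A B := by
    apply Set.eq_of_subset_of_subset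
    · intro t ht
      obtain ⟨ε, hε, hball⟩ := Metric.isOpen_iff.mp hTopen t ht
      rw [Real.ball_eq_Ioo] at hball
      have h1 : t - ε/2 ∈ T := hball ⟨by linarith, by linarith⟩
      have h2 : t + ε/2 ∈ T := hball ⟨by linarith, by linarith⟩
      exact ⟨lt_of_le_of_lt (csInf_le hbddB h1) (by linarith),
        lt_of_lt_of_le (by linarith) (le_csSup hbddA h2)⟩
    · rintro u ⟨hu1, hu2⟩
      obtain ⟨s, hs, hsu⟩ := (csInf_lt_iff hbddB hTne).mp hu1
      obtain ⟨t, ht, hut⟩ := (lt_csSup_iff hbddA hTne).mp hu2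
      exact hord s hs t ht u hsu hut
  have hAB : A < B := by
    rcases hTne with ⟨t, ht⟩
    rw [hTIoo] at ht
    exact lt_trans ht.1 ht.2
  have hA0 : 0 ≤ A := le_csInf hTne (fun r hr => le_of_lt (hTsub hr).1)
  have hB1 : B ≤ 1 := csSup_le hTne (fun r hr => le_of_lt (hTsub hr).2)
  refine ⟨x + A, x + B, by linarith, by linarith, ?_⟩
  rw [hST, hTIoo]
  have : e '' Set.Ioo A B = (fun r : ℝ => (r : ArcCircle)) '' ((fun t => x + t) '' Set.Ioo A B) := by
    rw [← Set.image_comp]; rfl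
  rw [this, Set.image_const_add_Ioo]

end CAB3

namespace CAB3
open Set

lemma image_Ioo_shift (a b : ℝ) (k : ℤ) :
    (fun r : ℝ => (r : ArcCircle)) '' Set.Ioo a b
      = (fun r : ℝ => (r : ArcCircle)) '' Set.Ioo (a + k) (b + k) := by
  ext w
  obtain ⟨t, rfl⟩ := QuotientAddGroup.mk_surjective w
  have hco : (QuotientAddGroup.mk t : ArcCircle) = ((t:ℝ) : ArcCircle) := rfl
  rw [hco, mem_image_Ioo, mem_image_Ioo]
  constructor
  · rintro ⟨m, hm⟩
    exact ⟨m + k, by push_cast; constructor <;> [linarith [hm.1]; linarith [hm.2]]⟩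
  · rintro ⟨m, hm⟩
    exact ⟨m - k, by push_cast at hm ⊢; constructor <;> [linarith [hm.1]; linarith [hm.2]]⟩

lemma infinite_arcCircle : Infinite ArcCircle := by
  have : Infinite (Set.Ioo (0:ℝ) 1) := Set.Ioo.infinite (by norm_num)
  apply Infinite.of_injective (fun t : Set.Ioo (0:ℝ) 1 => ((t : ℝ) : ArcCircle))
  rintro ⟨s, hs0, hs1⟩ ⟨t, ht0, ht1⟩ h
  obtain ⟨k, hk⟩ := (coe_eq_coe s t).mp h
  have h1 : (k:ℝ) < 1 := by linarith
  have h2 : (-1:ℝ) < k := by linarith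
  have h1' : k < 1 := by exact_mod_cast h1
  have h2' : -1 < k := by exact_mod_cast h2
  have : k = 0 := by omega
  subst this
  simp only [Int.cast_zero, add_zero] at hk
  exact Subtype.ext hk

lemma normalized {V : Type*} [Fintype V] {G : SimpleGraph V} (M : CAModel G) :
    ∃ (c : ℝ) (x y : V → ℝ),
      (∀ v, 0 < x v ∧ x v < 1 ∧ x v < y v ∧ y v ≤ x v + 1 ∧ y v ≠ 1) ∧
      (∀ v, (((c:ℝ) : ArcCircle) ∈ M.arc v ↔ 1 < y v)) ∧
      (∀ u v, ((M.arc u ∩ M.arc v).Nonempty ↔ ∃ k : ℤ, x u < y v + k ∧ x v + k < y u)) := by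
  have hpar : ∀ v, ∃ a b : ℝ, 0 < b - a ∧ b - a ≤ 1 ∧
      M.arc v = (fun r : ℝ => (r : ArcCircle)) '' Set.Ioo a b :=
    fun v => arc_param (M.isOpen_arc v) (M.isConnected_arc v) (M.arc_ne_univ v)
  choose a b hab1 hab2 harc using hpar
  have : ∃ z : ArcCircle, z ∉ (Set.range fun v => ((a v : ℝ) : ArcCircle)) ∪
      (Set.range fun v => ((b v : ℝ) : ArcCircle)) := by
    have hfin : ((Set.range fun v => ((a v : ℝ) : ArcCircle)) ∪
        (Set.range fun v => ((b v : ℝ) : ArcCircle))).Finite :=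
      (Set.finite_range _).union (Set.finite_range _)
    have : Infinite ArcCircle := infinite_arcCircle
    rcases hfin.infinite_compl.nonempty with ⟨z, hz⟩
    exact ⟨z, hz⟩
  obtain ⟨z, hznotin⟩ := this
  obtain ⟨c, rfl⟩ := QuotientAddGroup.mk_surjective z
  have hcoe : ∀ t : ℝ, (QuotientAddGroup.mk t : ArcCircle) = ((t:ℝ) : ArcCircle) := fun _ => rfl
  rw [hcoe c] at hznotin
  have hca : ∀ v, ((c:ℝ) : ArcCircle) ≠ ((a v : ℝ) : ArcCircle) := by
    intro v h
    exact hznotin (Or.inl ⟨v, h.symm⟩)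
  have hcb : ∀ v, ((c:ℝ) : ArcCircle) ≠ ((b v : ℝ) : ArcCircle) := by
    intro v h
    exact hznotin (Or.inr ⟨v, h.symm⟩)
  have hfr : ∀ v, a v - c - Int.fract (a v - c) = (⌊a v - c⌋ : ℝ) :=
    fun v => Int.self_sub_fract _
  have harc' : ∀ v, M.arc v = (fun r : ℝ => (r : ArcCircle)) ''
      Set.Ioo (c + Int.fract (a v - c)) (c + (Int.fract (a v - c) + (b v - a v))) := by
    intro v
    rw [harc v, image_Ioo_shift (a v) (b v) (-⌊a v - c⌋)]
    have e1 : a v + ((-⌊a v - c⌋ : ℤ) : ℝ) = c + Int.fract (a v - c) := by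
      push_cast; linarith [hfr v]
    have e2 : b v + ((-⌊a v - c⌋ : ℤ) : ℝ)
        = c + (Int.fract (a v - c) + (b v - a v)) := by
      push_cast; linarith [hfr v]
    rw [e1, e2]
  refine ⟨c, fun v => Int.fract (a v - c), fun v => Int.fract (a v - c) + (b v - a v),
    ?_, ?_, ?_⟩
  case _ =>
    intro v
    dsimp only
    have h0 : 0 ≤ Int.fract (a v - c) := Int.fract_nonneg _
    have h1 : Int.fract (a v - c) < 1 := Int.fract_lt_one _
    have hne : Int.fract (a v - c) ≠ 0 := by
      intro h
      exact hca v ((coe_eq_coe c (a v)).mpr ⟨-⌊a v - c⌋, by push_cast; linarith [hfr v]⟩)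
    have hyne : Int.fract (a v - c) + (b v - a v) ≠ 1 := by
      intro h
      exact hcb v ((coe_eq_coe c (b v)).mpr ⟨-⌊a v - c⌋ - 1, by push_cast; linarith [hfr v]⟩)
    exact ⟨lt_of_le_of_ne h0 (Ne.symm hne), h1, by linarith [hab1 v], by linarith [hab2 v], hyne⟩
  case _ =>
    intro v
    dsimp only
    have h0 : 0 ≤ Int.fract (a v - c) := Int.fract_nonneg _
    have h1 : Int.fract (a v - c) < 1 := Int.fract_lt_one _
    rw [harc' v, mem_image_Ioo]
    constructor
    · rintro ⟨k, hk1, hk2⟩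
      have hk1' : Int.fract (a v - c) < (k:ℝ) := by linarith
      have hk2' : (k:ℝ) < Int.fract (a v - c) + (b v - a v) := by linarith
      have hkl : (0:ℝ) < k := by linarith
      have hku : (k:ℝ) < 2 := by linarith [hab2 v]
      have g1 : 0 < k := by exact_mod_cast hkl
      have g2 : k < 2 := by exact_mod_cast hku
      have : k = 1 := by omega
      rw [this] at hk2'
      push_cast at hk2'
      linarith
    · intro hy
      exact ⟨1, by push_cast; constructor <;> linarith⟩
  case _ =>
    intro u v
    dsimp only
    rw [harc' u, harc' v]
    constructor
    · rintro ⟨w, hw1, hw2⟩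
      obtain ⟨t, rfl⟩ := QuotientAddGroup.mk_surjective w
      rw [hcoe t, mem_image_Ioo] at hw1 hw2
      obtain ⟨k1, hk1⟩ := hw1
      obtain ⟨k2, hk2⟩ := hw2
      refine ⟨k1 - k2, ?_, ?_⟩ <;> push_cast <;>
        [linarith [hk1.1, hk2.2]; linarith [hk1.2, hk2.1]]
    · rintro ⟨k, hk1, hk2⟩
      set xu := Int.fract (a u - c) with hxu
      set xv := Int.fract (a v - c) with hxv
      set lo := max xu (xv + (k:ℝ)) with hlo
      set hi := min (xu + (b u - a u)) (xv + (b v - a v) + (k:ℝ)) with hhi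
      have hlohi : lo < hi := by
        apply max_lt <;> apply lt_min
        · linarith [hab1 u]
        · linarith
        · linarith
        · linarith [hab1 v]
      refine ⟨((c + lo + (c + hi))/2 : ℝ), ?_, ?_⟩
      · rw [mem_image_Ioo]
        refine ⟨0, ?_⟩
        push_cast
        constructor
        · have := le_max_left xu (xv + (k:ℝ)); linarith
        · have := min_le_left (xu + (b u - a u)) (xv + (b v - a v) + (k:ℝ)); linarith
      · rw [mem_image_Ioo]
        refine ⟨-k, ?_⟩
        push_cast
        constructor
        · have := le_max_right xu (xv + (k:ℝ)); linarith
        · have := min_le_right (xu + (b u - a u)) (xv + (b v - a v) + (k:ℝ)); linarith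

end CAB3

namespace CAB3

lemma crit_nn {xu yu xv yv : ℝ} (hxu0 : 0 < xu) (hxu1 : xu < 1) (hu : xu < yu) (hu1 : yu ≤ xu + 1)
    (hyu : yu < 1) (hxv0 : 0 < xv) (hxv1 : xv < 1) (hv : xv < yv) (hv1 : yv ≤ xv + 1)
    (hyv : yv < 1) :
    (∃ k : ℤ, xu < yv + k ∧ xv + k < yu) ↔ (xu < yv ∧ xv < yu) := by
  constructor
  · rintro ⟨k, h1, h2⟩
    have b1 : (k:ℝ) < 1 := by linarith
    have b2 : (-1:ℝ) < k := by linarith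
    have b1' : k < 1 := by exact_mod_cast b1
    have b2' : -1 < k := by exact_mod_cast b2
    have : k = 0 := by omega
    subst this
    push_cast at h1 h2
    exact ⟨by linarith, by linarith⟩
  · rintro ⟨h1, h2⟩
    exact ⟨0, by push_cast; constructor <;> linarith⟩

lemma crit_nw {xu yu xv yv : ℝ} (hxu0 : 0 < xu) (hxu1 : xu < 1) (hu : xu < yu) (hu1 : yu ≤ xu + 1)
    (hyu : yu < 1) (hxv0 : 0 < xv) (hxv1 : xv < 1) (hv : xv < yv) (hv1 : yv ≤ xv + 1)
    (hyv : 1 < yv) :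
    (∃ k : ℤ, xu < yv + k ∧ xv + k < yu) ↔ (xv < yu ∨ xu < yv - 1) := by
  constructor
  · rintro ⟨k, h1, h2⟩
    have b1 : (k:ℝ) < 1 := by linarith
    have b2 : (-2:ℝ) < k := by linarith
    have b1' : k < 1 := by exact_mod_cast b1
    have b2' : -2 < k := by exact_mod_cast b2
    have : k = 0 ∨ k = -1 := by omega
    rcases this with rfl | rfl
    · push_cast at h2; exact Or.inl (by linarith)
    · push_cast at h1; exact Or.inr (by linarith)
  · rintro (h | h)
    · exact ⟨0, by push_cast; constructor <;> linarith⟩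
    · exact ⟨-1, by push_cast; constructor <;> linarith⟩

lemma crit_ww {xu yu xv yv : ℝ} (hxu1 : xu < 1) (hyu : 1 < yu) (hxv1 : xv < 1) (hyv : 1 < yv) :
    (∃ k : ℤ, xu < yv + k ∧ xv + k < yu) :=
  ⟨0, by push_cast; constructor <;> linarith⟩

lemma exists_k_comm {xu yu xv yv : ℝ} :
    (∃ k : ℤ, xu < yv + k ∧ xv + k < yu) ↔ (∃ k : ℤ, xv < yu + k ∧ xu + k < yv) := by
  constructor <;> rintro ⟨k, h1, h2⟩ <;> refine ⟨-k, ?_, ?_⟩ <;> push_cast <;> linarith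

noncomputable def phi (D : Finset ℝ) (r : ℝ) : ℕ := (D.filter (fun d => d ≤ r)).card

lemma phi_mono (D : Finset ℝ) {r s : ℝ} (h : r ≤ s) : phi D r ≤ phi D s := by
  apply Finset.card_le_card
  intro d hd
  rw [Finset.mem_filter] at hd ⊢
  exact ⟨hd.1, le_trans hd.2 h⟩

lemma phi_strict (D : Finset ℝ) {r s : ℝ} (hs : s ∈ D) (h : r < s) : phi D r < phi D s := by
  apply Finset.card_lt_card
  constructor
  · intro d hd
    rw [Finset.mem_filter] at hd ⊢
    exact ⟨hd.1, le_trans hd.2 (le_of_lt h)⟩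
  · intro hsub
    have h1 : s ∈ D.filter (fun d => d ≤ s) := Finset.mem_filter.mpr ⟨hs, le_refl s⟩
    have h2 := hsub h1
    rw [Finset.mem_filter] at h2
    linarith [h2.2]

lemma phi_lt_iff (D : Finset ℝ) {r s : ℝ} (hs : s ∈ D) :
    phi D r < phi D s ↔ r < s := by
  constructor
  · intro h
    by_contra hc
    push_neg at hc
    exact absurd (phi_mono D hc) (by omega)
  · exact phi_strict D hs

lemma phi_pos (D : Finset ℝ) {r : ℝ} (hr : r ∈ D) : 1 ≤ phi D r := by
  have : r ∈ D.filter (fun d => d ≤ r) := Finset.mem_filter.mpr ⟨hr, le_refl r⟩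
  exact Finset.card_pos.mpr ⟨r, this⟩

lemma phi_le_card (D : Finset ℝ) (r : ℝ) : phi D r ≤ D.card := Finset.card_filter_le _ _

lemma sharesEdge_comm {P Q : GridPath} : P.SharesEdge Q ↔ Q.SharesEdge P :=
  ⟨sharesEdge_symm, sharesEdge_symm⟩

theorem main {V : Type*} [Fintype V] (G : SimpleGraph V)
    (h : Nonempty (CAModel G)) : IsBkEPG G 3 := by
  classical
  obtain ⟨M⟩ := h
  obtain ⟨c, x, y, hxy, hcm, hinter⟩ := normalized M
  set yh : V → ℝ := fun v => if 1 < y v then y v - 1 else y v with hyh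
  set D : Finset ℝ := (Finset.univ.image x) ∪ (Finset.univ.image yh) with hD
  have hxD : ∀ v, x v ∈ D := fun v =>
    Finset.mem_union_left _ (Finset.mem_image_of_mem _ (Finset.mem_univ v))
  have hyhD : ∀ v, yh v ∈ D := fun v =>
    Finset.mem_union_right _ (Finset.mem_image_of_mem _ (Finset.mem_univ v))
  have hyhw : ∀ v, 1 < y v → yh v = y v - 1 := by
    intro v hv; rw [hyh]; dsimp only; rw [if_pos hv]
  have hyhnw : ∀ v, ¬1 < y v → yh v = y v := by
    intro v hv; rw [hyh]; dsimp only; rw [if_neg hv]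
  have hylt1 : ∀ v, ¬1 < y v → y v < 1 := by
    intro v hv
    exact lt_of_le_of_ne (not_lt.mp hv) (hxy v).2.2.2.2
  refine ⟨⟨fun v =>
    if hw : 1 < y v then
      wPath D.card (phi D (x v)) (phi D (yh v))
        (phi_pos D (hxD v)) (phi_le_card D _) (phi_pos D (hyhD v))
    else
      nwPath D.card (phi D (x v)) (phi D (yh v))
        (phi_pos D (hxD v))
        (phi_strict D (hyhD v) (by rw [hyhnw v hw]; exact (hxy v).2.2.1))
        (phi_le_card D _), ?_⟩, ?_⟩
  · -- adjacency
    intro u v huv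
    rw [M.adj_iff u v huv, hinter u v]
    obtain ⟨hxu0, hxu1, hu, hu1, _⟩ := hxy u
    obtain ⟨hxv0, hxv1, hv, hv1, _⟩ := hxy v
    by_cases hwu : 1 < y u <;> by_cases hwv : 1 < y v
    · rw [dif_pos hwu, dif_pos hwv]
      exact ⟨fun _ => wPath_shares_wPath _ _ _ _ _ _, fun _ => crit_ww hxu1 hwu hxv1 hwv⟩
    · rw [dif_pos hwu, dif_neg hwv, sharesEdge_comm, nwPath_shares_wPath,
        phi_lt_iff D (hyhD v), phi_lt_iff D (hyhD u), hyhnw v hwv, hyhw u hwu,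
        exists_k_comm]
      exact crit_nw hxv0 hxv1 hv hv1 (hylt1 v hwv) hxu0 hxu1 hu hu1 hwu
    · rw [dif_neg hwu, dif_pos hwv, nwPath_shares_wPath,
        phi_lt_iff D (hyhD u), phi_lt_iff D (hyhD v), hyhnw u hwu, hyhw v hwv]
      exact crit_nw hxu0 hxu1 hu hu1 (hylt1 u hwu) hxv0 hxv1 hv hv1 hwv
    · rw [dif_neg hwu, dif_neg hwv, nwPath_shares_nwPath,
        phi_lt_iff D (hyhD v), phi_lt_iff D (hyhD u), hyhnw u hwu, hyhnw v hwv]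
      exact crit_nn hxu0 hxu1 hu hu1 (hylt1 u hwu) hxv0 hxv1 hv hv1 (hylt1 v hwv)
  · -- bends
    intro v
    dsimp only
    by_cases hw : 1 < y v
    · rw [dif_pos hw]
      exact wPath_bends _ _ _
    · rw [dif_neg hw]
      exact nwPath_bends _ _ _

end CAB3

theorem CA_is_B3_EPG {V : Type*} [Fintype V] (G : SimpleGraph V)
    (h : Nonempty (CAModel G)) : IsBkEPG G 3 := CAB3.main G h
end

section
/- For every integer n ≥ 2, the thick spider S_n is a circular-arc graph. -/
open SimpleGraph

section CAhelpers
open Set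

private lemma coe_eq_coe_iff' (x y : ℝ) : (↑x : ArcCircle) = ↑y ↔ ∃ k : ℤ, x - y = k := by
  rw [QuotientAddGroup.eq_iff_sub_mem, AddSubgroup.mem_zmultiples_iff]
  constructor
  · rintro ⟨k, hk⟩; exact ⟨k, by simpa using hk.symm⟩
  · rintro ⟨k, hk⟩; exact ⟨k, by simpa using hk.symm⟩

/-- The open arc that is the image of the interval `(a, b)` on the circle. -/
noncomputable def arcOf (a b : ℝ) : Set ArcCircle := ((↑·) : ℝ → ArcCircle) '' Ioo a b

private lemma isOpen_arcOf (a b : ℝ) : IsOpen (arcOf a b) :=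
  QuotientAddGroup.isOpenMap_coe _ isOpen_Ioo

private lemma isConnected_arcOf {a b : ℝ} (h : a < b) : IsConnected (arcOf a b) :=
  (isConnected_Ioo h).image _ (AddCircle.continuous_mk' 1).continuousOn

private lemma mem_arcOf {a b x : ℝ} (h : x ∈ Ioo a b) : (↑x : ArcCircle) ∈ arcOf a b :=
  ⟨x, h, rfl⟩

private lemma arcOf_inter_nonempty {a b c d x y : ℝ} (hx : x ∈ Ioo a b) (hy : y ∈ Ioo c d)
    (k : ℤ) (h : x - y = k) : (arcOf a b ∩ arcOf c d).Nonempty :=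
  ⟨(x : ℝ), mem_arcOf hx, by
    rw [show ((x : ℝ) : ArcCircle) = ((y : ℝ) : ArcCircle) from (coe_eq_coe_iff' x y).2 ⟨k, h⟩]
    exact mem_arcOf hy⟩

private lemma arcOf_not_inter {a b c d : ℝ}
    (h : ∀ x ∈ Ioo a b, ∀ y ∈ Ioo c d, ∀ k : ℤ, x - y ≠ (k : ℝ)) :
    ¬ (arcOf a b ∩ arcOf c d).Nonempty := by
  rintro ⟨z, ⟨x, hx, rfl⟩, y, hy, hxy⟩
  obtain ⟨k, hk⟩ := (coe_eq_coe_iff' y x).1 hxy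
  exact h x hx y hy (-k) (by push_cast; linarith)

private lemma arcOf_ne_univ {a b : ℝ} (h : b - a < 1) : arcOf a b ≠ univ := by
  intro hu
  have hb : (↑b : ArcCircle) ∈ arcOf a b := hu ▸ mem_univ _
  obtain ⟨x, hx, hxb⟩ := hb
  obtain ⟨k, hk⟩ := (coe_eq_coe_iff' x b).1 hxb
  have h1 : (-1 : ℝ) < k := by rw [← hk]; linarith [hx.1]
  have h2 : (k : ℝ) < 0 := by rw [← hk]; linarith [hx.2]
  have h1' : (-1 : ℤ) < k := by exact_mod_cast h1
  have h2' : k < 0 := by exact_mod_cast h2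
  omega

end CAhelpers

theorem thickSpider_is_CA (n : ℕ) (hn : 2 ≤ n) :
    Nonempty (CAModel (thickSpider n)) := by
  classical
  set N : ℝ := (n : ℝ) with hNdef
  have hN2 : (2 : ℝ) ≤ N := by rw [hNdef]; exact_mod_cast hn
  have hN0 : (0 : ℝ) < N := by linarith
  have h4N : (0 : ℝ) < 4 * N := by linarith
  have h4N' : (4 * N) ≠ 0 := ne_of_gt h4N
  have hone : (4 * N) / (4 * N) = 1 := div_self h4N'
  have hlt : ∀ a b : ℝ, a < b → a / (4 * N) < b / (4 * N) :=
    fun a b hab => (div_lt_div_iff_of_pos_right h4N).2 hab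
  have hlt' : ∀ a b : ℝ, a / (4 * N) < b / (4 * N) → a < b :=
    fun a b hab => (div_lt_div_iff_of_pos_right h4N).1 hab
  have hval : ∀ i : Fin n, ((i : ℕ) : ℝ) + 1 ≤ N := by
    intro i
    have h : (i : ℕ) + 1 ≤ n := i.isLt
    rw [hNdef]
    exact_mod_cast h
  -- the arcs
  let arc : Fin n ⊕ Fin n → Set ArcCircle := fun v =>
    match v with
    | Sum.inl i => arcOf ((4 * (i : ℕ) + 1) / (4 * N)) ((4 * (i : ℕ) + 4 * N - 1) / (4 * N))
    | Sum.inr j => arcOf ((4 * (j : ℕ) - 1) / (4 * N)) ((4 * (j : ℕ) + 1) / (4 * N))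
  -- clique-clique intersection, i < j
  have hCC : ∀ i j : Fin n, (i : ℕ) < (j : ℕ) →
      (arc (Sum.inl i) ∩ arc (Sum.inl j)).Nonempty := by
    intro i j hij
    have hij' : ((i : ℕ) : ℝ) + 1 ≤ ((j : ℕ) : ℝ) := by exact_mod_cast hij
    have hjN := hval j
    refine arcOf_inter_nonempty (x := (4 * (i : ℕ) + 2) / (4 * N))
      ?_ (y := (4 * (i : ℕ) + 2 + 4 * N) / (4 * N)) ?_ (-1) ?_
    · exact ⟨hlt _ _ (by linarith), hlt _ _ (by linarith)⟩
    · exact ⟨hlt _ _ (by linarith), hlt _ _ (by linarith)⟩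
    · push_cast
      field_simp
      ring
  -- clique-stable intersection, i ≠ j
  have hCS : ∀ i j : Fin n, (i : ℕ) ≠ (j : ℕ) →
      (arc (Sum.inl i) ∩ arc (Sum.inr j)).Nonempty := by
    intro i j hij
    rcases lt_or_gt_of_ne hij with h | h
    · have hij' : ((i : ℕ) : ℝ) + 1 ≤ ((j : ℕ) : ℝ) := by exact_mod_cast h
      have hjN := hval j
      refine arcOf_inter_nonempty (x := (4 * (j : ℕ)) / (4 * N))
        ?_ (y := (4 * (j : ℕ)) / (4 * N)) ?_ 0 (by simp)
      · exact ⟨hlt _ _ (by linarith), hlt _ _ (by linarith)⟩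
      · exact ⟨hlt _ _ (by linarith), hlt _ _ (by linarith)⟩
    · have hij' : ((j : ℕ) : ℝ) + 1 ≤ ((i : ℕ) : ℝ) := by exact_mod_cast h
      have hiN := hval i
      refine arcOf_inter_nonempty (x := (4 * (j : ℕ) + 4 * N) / (4 * N))
        ?_ (y := (4 * (j : ℕ)) / (4 * N)) ?_ 1 ?_
      · exact ⟨hlt _ _ (by linarith), hlt _ _ (by linarith)⟩
      · exact ⟨hlt _ _ (by linarith), hlt _ _ (by linarith)⟩
      · push_cast
        field_simp
        ring
  -- clique i and stable i are disjoint
  have hCSdisj : ∀ i : Fin n, ¬ (arc (Sum.inl i) ∩ arc (Sum.inr i)).Nonempty := by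
    intro i
    apply arcOf_not_inter
    rintro x ⟨hx1, hx2⟩ y ⟨hy1, hy2⟩ k hk
    have h1 : (0 : ℝ) < (k : ℝ) := by rw [← hk]; linarith
    have h2 : (k : ℝ) < 1 := by
      rw [← hk]
      have hd : x - y < (4 * (i : ℕ) + 4 * N - 1) / (4 * N) - (4 * (i : ℕ) - 1) / (4 * N) := by
        linarith
      rw [div_sub_div_same,
        show (4 * ((i : ℕ) : ℝ) + 4 * N - 1) - (4 * ((i : ℕ) : ℝ) - 1) = 4 * N by ring,
        hone] at hd
      linarith
    have h1' : (0 : ℤ) < k := by exact_mod_cast h1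
    have h2' : k < 1 := by exact_mod_cast h2
    omega
  -- stable i and stable j are disjoint for i ≠ j
  have hSSdisj : ∀ i j : Fin n, (i : ℕ) ≠ (j : ℕ) →
      ¬ (arc (Sum.inr i) ∩ arc (Sum.inr j)).Nonempty := by
    intro i j hij
    apply arcOf_not_inter
    rintro x ⟨hx1, hx2⟩ y ⟨hy1, hy2⟩ k hk
    have hiN := hval i
    have hjN := hval j
    have hi0 : (0 : ℝ) ≤ ((i : ℕ) : ℝ) := Nat.cast_nonneg _
    have hj0 : (0 : ℝ) ≤ ((j : ℕ) : ℝ) := Nat.cast_nonneg _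
    have hupp : x - y < ((4 * (i : ℕ) + 1) - (4 * (j : ℕ) - 1)) / (4 * N) := by
      rw [sub_div]; linarith
    have hlow : ((4 * (i : ℕ) - 1) - (4 * (j : ℕ) + 1)) / (4 * N) < x - y := by
      rw [sub_div]; linarith
    have hk1 : (k : ℝ) < 1 := by
      have h1 : ((4 * (i : ℕ) + 1) - (4 * (j : ℕ) - 1)) / (4 * N) < (4 * N) / (4 * N) :=
        hlt _ _ (by linarith)
      rw [hone] at h1
      rw [← hk]; linarith
    have hk2 : (-1 : ℝ) < (k : ℝ) := by
      have h1 : (-(4 * N)) / (4 * N) < ((4 * (i : ℕ) - 1) - (4 * (j : ℕ) + 1)) / (4 * N) :=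
        hlt _ _ (by linarith)
      rw [neg_div, hone] at h1
      rw [← hk]; linarith
    have hk1' : k < 1 := by exact_mod_cast hk1
    have hk2' : (-1 : ℤ) < k := by exact_mod_cast hk2
    have hk0 : k = 0 := by omega
    rw [hk0] at hk
    have hxy : x = y := by push_cast at hk; linarith
    subst hxy
    have hd1 : (4 * ((i : ℕ) : ℝ) - 1) < 4 * ((j : ℕ) : ℝ) + 1 := hlt' _ _ (lt_trans hx1 hy2)
    have hd2 : (4 * ((j : ℕ) : ℝ) - 1) < 4 * ((i : ℕ) : ℝ) + 1 := hlt' _ _ (lt_trans hy1 hx2)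
    rcases lt_or_gt_of_ne hij with h | h
    · have : ((i : ℕ) : ℝ) + 1 ≤ ((j : ℕ) : ℝ) := by exact_mod_cast h
      linarith
    · have : ((j : ℕ) : ℝ) + 1 ≤ ((i : ℕ) : ℝ) := by exact_mod_cast h
      linarith
  refine ⟨⟨arc, ?_, ?_, ?_, ?_⟩⟩
  · rintro (i | j) <;> exact isOpen_arcOf _ _
  · rintro (i | j)
    · exact isConnected_arcOf (hlt _ _ (by linarith))
    · exact isConnected_arcOf (hlt _ _ (by linarith))
  · rintro (i | j)
    · apply arcOf_ne_univ
      rw [div_sub_div_same]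
      exact lt_of_lt_of_eq (hlt _ _ (by linarith)) hone
    · apply arcOf_ne_univ
      rw [div_sub_div_same]
      exact lt_of_lt_of_eq (hlt _ _ (by linarith)) hone
  · rintro (i | i) (j | j) huv
    · have hij : i ≠ j := fun h => huv (by rw [h])
      have hv : (i : ℕ) ≠ (j : ℕ) := fun h => hij (Fin.ext h)
      refine iff_of_true hij ?_
      rcases lt_or_gt_of_ne hv with h | h
      · exact hCC i j h
      · exact Set.inter_comm _ _ ▸ hCC j i h
    · by_cases hij : i = j
      · subst hij
        exact iff_of_false (fun h => h rfl) (hCSdisj i)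
      · have hv : (i : ℕ) ≠ (j : ℕ) := fun h => hij (Fin.ext h)
        exact iff_of_true hij (hCS i j hv)
    · by_cases hij : i = j
      · subst hij
        exact iff_of_false (fun h => h rfl)
          (fun hne => hCSdisj i (Set.inter_comm _ _ ▸ hne))
      · have hv : (j : ℕ) ≠ (i : ℕ) := fun h => hij (Fin.ext h.symm)
        exact iff_of_true hij (Set.inter_comm _ _ ▸ hCS j i hv)
    · have hij : i ≠ j := fun h => huv (by rw [h])
      have hv : (i : ℕ) ≠ (j : ℕ) := fun h => hij (Fin.ext h)
      exact iff_of_false (fun h => h) (hSSdisj i j hv)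
end

section
/- The thick spider S_6 is a B_2-EPR graph but is not a normal circular-arc graph: S_6 admits an EPR representation in which every path has at most 2 bends, yet in every circular-arc model of S_6 some two arcs together cover the whole circle. -/
open SimpleGraph

instance gridAdjDec : DecidableRel gridGraph.Adj := fun p q =>
  inferInstanceAs (Decidable ((p.1 = q.1 ∧ |p.2 - q.2| = 1) ∨ (p.2 = q.2 ∧ |p.1 - q.1| = 1)))

def walkP0 : gridGraph.Walk (4, 0) (0, 1) :=
  (.cons (by decide : gridGraph.Adj (4, 0) (4, 1)) (.cons (by decide : gridGraph.Adj (4, 1) (4, 2)) (.cons (by decide : gridGraph.Adj (4, 2) (4, 3)) (.cons (by decide : gridGraph.Adj (4, 3) (4, 4)) (.cons (by decide : gridGraph.Adj (4, 4) (3, 4)) (.cons (by decide : gridGraph.Adj (3, 4) (2, 4)) (.cons (by decide : gridGraph.Adj (2, 4) (1, 4)) (.cons (by decide : gridGraph.Adj (1, 4) (0, 4)) (.cons (by decide : gridGraph.Adj (0, 4) (0, 3)) (.cons (by decide : gridGraph.Adj (0, 3) (0, 2)) (.cons (by decide : gridGraph.Adj (0, 2) (0, 1)) (.nil : gridGraph.Walk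 (0, 1) (0, 1)))))))))))))

def pathP0 : GridPath :=
  ⟨_, _, walkP0, by rw [SimpleGraph.Walk.isPath_def]; decide, by decide⟩

def walkP1 : gridGraph.Walk (4, 1) (0, 0) :=
  (.cons (by decide : gridGraph.Adj (4, 1) (4, 2)) (.cons (by decide : gridGraph.Adj (4, 2) (4, 3)) (.cons (by decide : gridGraph.Adj (4, 3) (4, 4)) (.cons (by decide : gridGraph.Adj (4, 4) (3, 4)) (.cons (by decide : gridGraph.Adj (3, 4) (2, 4)) (.cons (by decide : gridGraph.Adj (2, 4) (1, 4)) (.cons (by decide : gridGraph.Adj (1, 4) (0, 4)) (.cons (by decide : gridGraph.Adj (0, 4) (0, 3)) (.cons (by decide : gridGraph.Adj (0, 3) (0, 2)) (.cons (by decide : gridGraph.Adj (0, 2) (0, 1)) (.cons (by decide : gridGraph.Adj (0, 1) (0, 0)) (.nil : gridGraph.Walk (0, 0) (0, 0)))))))))))))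

def pathP1 : GridPath :=
  ⟨_, _, walkP1, by rw [SimpleGraph.Walk.isPath_def]; decide, by decide⟩

def walkP2 : gridGraph.Walk (4, 4) (4, 0) :=
  (.cons (by decide : gridGraph.Adj (4, 4) (3, 4)) (.cons (by decide : gridGraph.Adj (3, 4) (2, 4)) (.cons (by decide : gridGraph.Adj (2, 4) (1, 4)) (.cons (by decide : gridGraph.Adj (1, 4) (0, 4)) (.cons (by decide : gridGraph.Adj (0, 4) (0, 3)) (.cons (by decide : gridGraph.Adj (0, 3) (0, 2)) (.cons (by decide : gridGraph.Adj (0, 2) (0, 1)) (.cons (by decide : gridGraph.Adj (0, 1) (0, 0)) (.cons (by decide : gridGraph.Adj (0, 0) (1, 0)) (.cons (by decide : gridGraph.Adj (1, 0) (2, 0)) (.cons (by decide : gridGraph.Adj (2, 0) (3, 0)) (.cons (by decide : gridGraph.Adj (3, 0) (4, 0)) (.nil : gridGraph.Walk (4, 0) (4, 0))))))))))))))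

def pathP2 : GridPath :=
  ⟨_, _, walkP2, by rw [SimpleGraph.Walk.isPath_def]; decide, by decide⟩

def walkP3 : gridGraph.Walk (0, 4) (4, 3) :=
  (.cons (by decide : gridGraph.Adj (0, 4) (0, 3)) (.cons (by decide : gridGraph.Adj (0, 3) (0, 2)) (.cons (by decide : gridGraph.Adj (0, 2) (0, 1)) (.cons (by decide : gridGraph.Adj (0, 1) (0, 0)) (.cons (by decide : gridGraph.Adj (0, 0) (1, 0)) (.cons (by decide : gridGraph.Adj (1, 0) (2, 0)) (.cons (by decide : gridGraph.Adj (2, 0) (3, 0)) (.cons (by decide : gridGraph.Adj (3, 0) (4, 0)) (.cons (by decide : gridGraph.Adj (4, 0) (4, 1)) (.cons (by decide : gridGraph.Adj (4, 1) (4, 2)) (.cons (by decide : gridGraph.Adj (4, 2) (4, 3)) (.nil : gridGraph.Walk (4, 3) (4, 3)))))))))))))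

def pathP3 : GridPath :=
  ⟨_, _, walkP3, by rw [SimpleGraph.Walk.isPath_def]; decide, by decide⟩

def walkP4 : gridGraph.Walk (0, 3) (4, 4) :=
  (.cons (by decide : gridGraph.Adj (0, 3) (0, 2)) (.cons (by decide : gridGraph.Adj (0, 2) (0, 1)) (.cons (by decide : gridGraph.Adj (0, 1) (0, 0)) (.cons (by decide : gridGraph.Adj (0, 0) (1, 0)) (.cons (by decide : gridGraph.Adj (1, 0) (2, 0)) (.cons (by decide : gridGraph.Adj (2, 0) (3, 0)) (.cons (by decide : gridGraph.Adj (3, 0) (4, 0)) (.cons (by decide : gridGraph.Adj (4, 0) (4, 1)) (.cons (by decide : gridGraph.Adj (4, 1) (4, 2)) (.cons (by decide : gridGraph.Adj (4, 2) (4, 3)) (.cons (by decide : gridGraph.Adj (4, 3) (4, 4)) (.nil : gridGraph.Walk (4, 4) (4, 4)))))))))))))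

def pathP4 : GridPath :=
  ⟨_, _, walkP4, by rw [SimpleGraph.Walk.isPath_def]; decide, by decide⟩

def walkP5 : gridGraph.Walk (0, 0) (0, 4) :=
  (.cons (by decide : gridGraph.Adj (0, 0) (1, 0)) (.cons (by decide : gridGraph.Adj (1, 0) (2, 0)) (.cons (by decide : gridGraph.Adj (2, 0) (3, 0)) (.cons (by decide : gridGraph.Adj (3, 0) (4, 0)) (.cons (by decide : gridGraph.Adj (4, 0) (4, 1)) (.cons (by decide : gridGraph.Adj (4, 1) (4, 2)) (.cons (by decide : gridGraph.Adj (4, 2) (4, 3)) (.cons (by decide : gridGraph.Adj (4, 3) (4, 4)) (.cons (by decide : gridGraph.Adj (4, 4) (3, 4)) (.cons (by decide : gridGraph.Adj (3, 4) (2, 4)) (.cons (by decide : gridGraph.Adj (2, 4) (1, 4)) (.cons (by decide : gridGraph.Adj (1, 4) (0, 4)) (.nil : gridGraph.Walk (0, 4) (0, 4))))))))))))))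

def pathP5 : GridPath :=
  ⟨_, _, walkP5, by rw [SimpleGraph.Walk.isPath_def]; decide, by decide⟩

def walkQ0 : gridGraph.Walk (0, 1) (1, 0) :=
  (.cons (by decide : gridGraph.Adj (0, 1) (0, 0)) (.cons (by decide : gridGraph.Adj (0, 0) (1, 0)) (.nil : gridGraph.Walk (1, 0) (1, 0))))

def pathQ0 : GridPath :=
  ⟨_, _, walkQ0, by rw [SimpleGraph.Walk.isPath_def]; decide, by decide⟩

def walkQ1 : gridGraph.Walk (3, 0) (4, 1) :=
  (.cons (by decide : gridGraph.Adj (3, 0) (4, 0)) (.cons (by decide : gridGraph.Adj (4, 0) (4, 1)) (.nil : gridGraph.Walk (4, 1) (4, 1))))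

def pathQ1 : GridPath :=
  ⟨_, _, walkQ1, by rw [SimpleGraph.Walk.isPath_def]; decide, by decide⟩

def walkQ2 : gridGraph.Walk (4, 2) (4, 3) :=
  (.cons (by decide : gridGraph.Adj (4, 2) (4, 3)) (.nil : gridGraph.Walk (4, 3) (4, 3)))

def pathQ2 : GridPath :=
  ⟨_, _, walkQ2, by rw [SimpleGraph.Walk.isPath_def]; decide, by decide⟩

def walkQ3 : gridGraph.Walk (4, 3) (3, 4) :=
  (.cons (by decide : gridGraph.Adj (4, 3) (4, 4)) (.cons (by decide : gridGraph.Adj (4, 4) (3, 4)) (.nil : gridGraph.Walk (3, 4) (3, 4))))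

def pathQ3 : GridPath :=
  ⟨_, _, walkQ3, by rw [SimpleGraph.Walk.isPath_def]; decide, by decide⟩

def walkQ4 : gridGraph.Walk (1, 4) (0, 3) :=
  (.cons (by decide : gridGraph.Adj (1, 4) (0, 4)) (.cons (by decide : gridGraph.Adj (0, 4) (0, 3)) (.nil : gridGraph.Walk (0, 3) (0, 3))))

def pathQ4 : GridPath :=
  ⟨_, _, walkQ4, by rw [SimpleGraph.Walk.isPath_def]; decide, by decide⟩

def walkQ5 : gridGraph.Walk (0, 3) (0, 1) :=
  (.cons (by decide : gridGraph.Adj (0, 3) (0, 2)) (.cons (by decide : gridGraph.Adj (0, 2) (0, 1)) (.nil : gridGraph.Walk (0, 1) (0, 1))))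

def pathQ5 : GridPath :=
  ⟨_, _, walkQ5, by rw [SimpleGraph.Walk.isPath_def]; decide, by decide⟩


def thePaths : Fin 6 ⊕ Fin 6 → GridPath
  | .inl ⟨0,_⟩ => pathP0
  | .inl ⟨1,_⟩ => pathP1
  | .inl ⟨2,_⟩ => pathP2
  | .inl ⟨3,_⟩ => pathP3
  | .inl ⟨4,_⟩ => pathP4
  | .inl ⟨_+5,_⟩ => pathP5
  | .inr ⟨0,_⟩ => pathQ0
  | .inr ⟨1,_⟩ => pathQ1
  | .inr ⟨2,_⟩ => pathQ2
  | .inr ⟨3,_⟩ => pathQ3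
  | .inr ⟨4,_⟩ => pathQ4
  | .inr ⟨_+5,_⟩ => pathQ5

instance spiderAdjDec : DecidableRel (thickSpider 6).Adj := fun u v =>
  match u, v with
  | .inl i, .inl j => inferInstanceAs (Decidable (i ≠ j))
  | .inl i, .inr j => inferInstanceAs (Decidable (i ≠ j))
  | .inr i, .inl j => inferInstanceAs (Decidable (i ≠ j))
  | .inr _, .inr _ => inferInstanceAs (Decidable False)

instance sharesDec (P Q : GridPath) : Decidable (P.SharesEdge Q) :=
  inferInstanceAs (Decidable (∃ e, e ∈ P.walk.edges ∧ e ∈ Q.walk.edges))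

instance rectDec (x1 x2 y1 y2 : ℤ) (p : ℤ × ℤ) :
    Decidable (p ∈ rectBoundary x1 x2 y1 y2) :=
  inferInstanceAs (Decidable (((p.1 = x1 ∨ p.1 = x2) ∧ y1 ≤ p.2 ∧ p.2 ≤ y2) ∨
       ((p.2 = y1 ∨ p.2 = y2) ∧ x1 ≤ p.1 ∧ p.1 ≤ x2)))

theorem spider_part1 : IsBkEPR (thickSpider 6) 2 := by
  refine ⟨⟨thePaths, ?_⟩, ⟨0, 4, 0, 4, by norm_num, by norm_num, ?_⟩, ?_⟩
  · decide
  · decide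
  · decide

namespace Spider
open Set

noncomputable def pi (x : ℝ) : ArcCircle := (x : ArcCircle)

lemma pi_eq_pi_iff {x y : ℝ} : pi x = pi y ↔ ∃ n : ℤ, y = x + n := by
  rw [pi, pi, QuotientAddGroup.eq_iff_sub_mem, AddSubgroup.mem_zmultiples_iff]
  constructor
  · rintro ⟨k, hk⟩
    exact ⟨-k, by push_cast [zsmul_eq_mul] at hk ⊢; linarith⟩
  · rintro ⟨n, hn⟩
    exact ⟨-n, by push_cast [zsmul_eq_mul]; linarith⟩

lemma pi_add_int (x : ℝ) (n : ℤ) : pi (x + n) = pi x := by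
  refine (pi_eq_pi_iff.mpr ⟨n, rfl⟩).symm

lemma pi_surjective : Function.Surjective pi := fun z => Quotient.exists_rep z

lemma mem_pi_image {x : ℝ} {S : Set ℝ} : pi x ∈ pi '' S ↔ ∃ n : ℤ, x + n ∈ S := by
  constructor
  · rintro ⟨t, ht, he⟩
    obtain ⟨n, hn⟩ := pi_eq_pi_iff.mp he
    exact ⟨-n, by rw [show x + ((-n : ℤ) : ℝ) = t by push_cast; linarith]; exact ht⟩
  · rintro ⟨n, hn⟩
    exact ⟨x + n, hn, pi_add_int x n⟩

lemma pi_image_translate (S : Set ℝ) (n : ℤ) : pi '' ((fun t => t + (n:ℝ)) '' S) = pi '' S := by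
  ext z
  obtain ⟨x, rfl⟩ := pi_surjective z
  rw [mem_pi_image, mem_pi_image]
  constructor
  · rintro ⟨m, t, ht, hmt⟩
    simp only at hmt
    exact ⟨m - n, by rw [show x + ((m - n : ℤ):ℝ) = t by push_cast; linarith]; exact ht⟩
  · rintro ⟨m, hm⟩
    exact ⟨m + n, x + m, hm, by push_cast; ring⟩

lemma pi_image_Ioo_translate (a b : ℝ) (n : ℤ) : pi '' Ioo (a + n) (b + n) = pi '' Ioo a b := by
  rw [← pi_image_translate (Ioo a b) n]
  congr 1
  rw [show (fun t => t + (n:ℝ)) '' Ioo a b = Ioo (a + n) (b + n) from Set.image_add_const_Ioo (n:ℝ) a b]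

lemma pi_image_Icc_univ (a : ℝ) : pi '' Icc a (a + 1) = univ := by
  haveI : Fact ((0:ℝ) < 1) := ⟨one_pos⟩
  exact AddCircle.coe_image_Icc_eq 1 a


lemma le_left {a b c : ℝ} (hab : a < b) (h : ∀ x, a < x → x < b → c ≤ x) : c ≤ a := by
  by_contra h'
  push_neg at h'
  have hm : a < min b c := lt_min hab h'
  set x := (a + min b c)/2 with hx
  have h1 : a < x := by simp only [hx]; linarith
  have h2 : x < b := by have : min b c ≤ b := min_le_left _ _; simp only [hx]; linarith
  have h3 : x < c := by have : min b c ≤ c := min_le_right _ _; simp only [hx]; linarith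
  exact absurd (h x h1 h2) (by linarith)

lemma le_right {a b c : ℝ} (hab : a < b) (h : ∀ x, a < x → x < b → x ≤ c) : b ≤ c := by
  by_contra h'
  push_neg at h'
  have hm : max a c < b := max_lt hab h'
  set x := (max a c + b)/2 with hx
  have h1 : a < x := by have : a ≤ max a c := le_max_left _ _; simp only [hx]; linarith
  have h2 : x < b := by simp only [hx]; linarith
  have h3 : c < x := by have : c ≤ max a c := le_max_right _ _; simp only [hx]; linarith
  exact absurd (h x h1 h2) (by linarith)

lemma gap {a b u v : ℝ} (hab : a < b) (hba : b ≤ a + 1) (huv : u < v)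
    (h : ∀ x, u < x → x < v → ∀ n : ℤ, ¬ (a < x + n ∧ x + n < b)) :
    ∃ n : ℤ, b ≤ u + n ∧ v + n ≤ a + 1 := by
  set x₀ : ℝ := (u + v)/2 with hx₀def
  have hx₀u : u < x₀ := by simp only [hx₀def]; linarith
  have hx₀v : x₀ < v := by simp only [hx₀def]; linarith
  set m : ℤ := ⌈b - x₀⌉ with hm
  have h1 : b ≤ x₀ + m := by have := Int.le_ceil (b - x₀); simp only [← hm] at this; linarith
  have h2 : x₀ + m < b + 1 := by
    have := Int.ceil_lt_add_one (b - x₀); simp only [← hm] at this; linarith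
  have h3 : x₀ + m ≤ a + 1 := by
    by_contra h'
    push_neg at h'
    refine h x₀ hx₀u hx₀v (m-1) ⟨by push_cast; linarith, by push_cast; linarith⟩
  have key : ∀ x, u < x → x < v → b ≤ x + m ∧ x + m ≤ a + 1 := by
    intro x hux hxv
    constructor
    · by_contra h'
      push_neg at h'
      have hxa : x + m ≤ a := by
        by_contra h''
        push_neg at h''
        exact h x hux hxv m ⟨h'', h'⟩
      set y : ℝ := (a + b)/2 - m with hy
      have hy1 : x ≤ y := by simp only [hy]; linarith
      have hy2 : y ≤ x₀ := by simp only [hy]; linarith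
      exact h y (lt_of_lt_of_le hux hy1) (lt_of_le_of_lt hy2 hx₀v) m
        ⟨by simp only [hy]; push_cast; linarith, by simp only [hy]; push_cast; linarith⟩
    · by_contra h'
      push_neg at h'
      by_cases hc : x + (m-1 : ℤ) < b
      · refine h x hux hxv (m-1) ⟨by push_cast; linarith, hc⟩
      · push_neg at hc
        push_cast at hc
        set y : ℝ := (a + b)/2 - (m - 1) with hy
        have hy1 : x₀ ≤ y := by simp only [hy]; linarith
        have hy2 : y ≤ x := by simp only [hy]; linarith
        exact h y (lt_of_lt_of_le hx₀u hy1) (lt_of_le_of_lt hy2 hxv) (m-1)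
          ⟨by simp only [hy]; push_cast; linarith, by simp only [hy]; push_cast; linarith⟩
  refine ⟨m, ?_, ?_⟩
  · have := le_left huv (fun x h1 h2 => by linarith [(key x h1 h2).1] : ∀ x, u < x → x < v → b - m ≤ x)
    linarith
  · have := le_right huv (fun x h1 h2 => by linarith [(key x h1 h2).2] : ∀ x, u < x → x < v → x ≤ a + 1 - m)
    linarith

lemma ord_disj {a b c d : ℝ} (hab : a < b) (hcd : c < d)
    (h : ∀ x, ¬(a < x ∧ x < b ∧ c < x ∧ x < d)) (hac : a ≤ c) : b ≤ c := by
  by_contra h'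
  push_neg at h'
  have hm : c < min b d := lt_min h' hcd
  set x := (c + min b d)/2 with hx
  have h1 : c < x := by simp only [hx]; linarith
  have h2 : x < b := by have : min b d ≤ b := min_le_left _ _; simp only [hx]; linarith
  have h3 : x < d := by have : min b d ≤ d := min_le_right _ _; simp only [hx]; linarith
  exact h x ⟨lt_of_le_of_lt hac h1, h2, h1, h3⟩


lemma pi_continuous : Continuous pi := AddCircle.continuous_mk' 1

lemma pi_isOpenMap : IsOpenMap pi := QuotientAddGroup.isOpenMap_coe

/-- classification of arcs -/
lemma arc_rep {U : Set ArcCircle} (hO : IsOpen U) (hC : IsConnected U) (hne : U ≠ univ) :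
    ∃ a b : ℝ, a < b ∧ b ≤ a + 1 ∧ U = pi '' Ioo a b := by
  obtain ⟨z, hz⟩ := hC.nonempty
  obtain ⟨x₀, rfl⟩ := pi_surjective z
  set V : Set ℝ := pi ⁻¹' U with hV
  have hVopen : IsOpen V := hO.preimage pi_continuous
  have hx₀V : x₀ ∈ V := hz
  set C : Set ℝ := connectedComponentIn V x₀ with hCdef
  have hCopen : IsOpen C := hVopen.connectedComponentIn
  have hCsub : C ⊆ V := connectedComponentIn_subset V x₀
  have hx₀C : x₀ ∈ C := mem_connectedComponentIn hx₀V
  have hCpre : IsPreconnected C := isPreconnected_connectedComponentIn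
  -- translated components
  have hVtrans : ∀ (n : ℤ) (t : ℝ), t ∈ V → t + n ∈ V := by
    intro n t ht
    simpa [hV, mem_preimage, pi_add_int] using ht
  have htransC : ∀ n : ℤ, (fun t => t + (n:ℝ)) '' C = connectedComponentIn V (x₀ + n) := by
    have key : ∀ (n : ℤ) (x : ℝ), x ∈ V →
        (fun t => t + (n:ℝ)) '' connectedComponentIn V x ⊆ connectedComponentIn V (x + n) := by
      intro n x hx
      apply IsPreconnected.subset_connectedComponentIn
      · exact isPreconnected_connectedComponentIn.image _ (continuous_add_right ((n:ℝ))).continuousOn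
      · exact ⟨x, mem_connectedComponentIn hx, rfl⟩
      · rintro t ⟨s, hs, rfl⟩
        exact hVtrans n s (connectedComponentIn_subset V x hs)
    intro n
    apply Subset.antisymm (key n x₀ hx₀V)
    intro t ht
    have h2 := key (-n) (x₀ + n) (hVtrans n x₀ hx₀V) ⟨t, ht, rfl⟩
    have : t + (((-n):ℤ):ℝ) ∈ connectedComponentIn V (x₀ + n + ((-n:ℤ):ℝ)) := by
      convert h2 using 2
    refine ⟨t + ((-n:ℤ):ℝ), ?_, by push_cast; ring⟩
    convert this using 2
    push_cast; ring
  set S : Set ℝ := ⋃ n : ℤ, (fun t => t + (n:ℝ)) '' C with hS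
  have hCS : C ⊆ S := by
    intro t ht
    exact mem_iUnion.mpr ⟨0, ⟨t, ht, by simp⟩⟩
  set T : Set ℝ := V \ S with hT
  have hTopen : IsOpen T := by
    rw [isOpen_iff_mem_nhds]
    intro y hy
    have hyV : y ∈ V := hy.1
    have hcomp : connectedComponentIn V y ⊆ T := by
      intro t ht
      refine ⟨connectedComponentIn_subset V y ht, ?_⟩
      intro htS
      obtain ⟨W, ⟨n, rfl⟩, htn0⟩ := htS
      have htn : t ∈ connectedComponentIn V (x₀ + n) := by rw [← htransC n]; exact htn0
      have e1 : connectedComponentIn V t = connectedComponentIn V y := (connectedComponentIn_eq ht).symm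
      have e2 : connectedComponentIn V t = connectedComponentIn V (x₀ + n) :=
        (connectedComponentIn_eq htn).symm
      have : y ∈ connectedComponentIn V (x₀ + n) := by
        rw [← e2, e1]
        exact mem_connectedComponentIn hyV
      rw [← htransC n] at this
      exact hy.2 (mem_iUnion.mpr ⟨n, this⟩)
    exact mem_nhds_iff.mpr ⟨connectedComponentIn V y, hcomp,
      hVopen.connectedComponentIn, mem_connectedComponentIn hyV⟩
  -- disjoint images
  have hdisj : U ∩ (pi '' C ∩ pi '' T) = ∅ := by
    ext z; simp only [mem_inter_iff, mem_empty_iff_false, iff_false]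
    rintro ⟨-, hzc, hzt⟩
    obtain ⟨t, ht, rfl⟩ := hzc
    obtain ⟨t', ht', he⟩ := hzt
    obtain ⟨n, hn⟩ := pi_eq_pi_iff.mp he.symm
    exact ht'.2 (mem_iUnion.mpr ⟨n, ⟨t, ht, hn.symm⟩⟩)
  have hcover : U ⊆ pi '' C ∪ pi '' T := by
    intro z hzU
    obtain ⟨t, rfl⟩ := pi_surjective z
    have htV : t ∈ V := hzU
    by_cases htS : t ∈ S
    · obtain ⟨W, ⟨n, rfl⟩, ⟨s, hs, rfl⟩⟩ := htS
      exact Or.inl ⟨s, hs, (pi_add_int s n).symm⟩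
    · exact Or.inr ⟨t, ⟨htV, htS⟩, rfl⟩
  have hUC : U = pi '' C := by
    have hCopen' : IsOpen (pi '' C) := pi_isOpenMap C hCopen
    have hTopen' : IsOpen (pi '' T) := pi_isOpenMap T hTopen
    have h1 : (U ∩ pi '' C).Nonempty := ⟨pi x₀, hz, ⟨x₀, hx₀C, rfl⟩⟩
    by_cases h2 : (U ∩ pi '' T).Nonempty
    · exfalso
      obtain ⟨z, hzz⟩ := hC.isPreconnected _ _ hCopen' hTopen' hcover h1 h2
      exact absurd (hdisj ▸ hzz) (notMem_empty z)
    · apply Subset.antisymm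
      · intro z hzU
        rcases hcover hzU with h | h
        · exact h
        · exact absurd ⟨z, hzU, h⟩ h2
      · intro z hzC
        obtain ⟨t, ht, rfl⟩ := hzC
        exact hCsub ht
  -- diameter < 1
  have hdiam : ∀ s ∈ C, ∀ t ∈ C, t < s + 1 := by
    intro s hs t ht
    by_contra hlt
    push_neg at hlt
    have hIcc : Icc s t ⊆ C := hCpre.Icc_subset hs ht
    have : pi '' Icc s (s+1) ⊆ U := by
      rw [hUC]
      exact image_mono (fun x hx => hIcc ⟨hx.1, le_trans hx.2 hlt⟩)
    rw [pi_image_Icc_univ s] at this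
    exact hne (Subset.antisymm (subset_univ U) this)
  have hbddA : BddAbove C := ⟨x₀ + 1, fun t ht => le_of_lt (hdiam x₀ hx₀C t ht)⟩
  have hbddB : BddBelow C := ⟨x₀ - 1, fun t ht => by have := hdiam t ht x₀ hx₀C; linarith⟩
  set a : ℝ := sInf C with ha
  set b : ℝ := sSup C with hb
  have hCne : C.Nonempty := ⟨x₀, hx₀C⟩
  have hsub1 : C ⊆ Ioo a b := by
    intro t ht
    obtain ⟨ε, hε, hball⟩ := Metric.isOpen_iff.mp hCopen t ht
    have h1 : t - ε/2 ∈ C := hball (by simp [abs_of_pos hε, Real.dist_eq, abs_of_neg]; linarith)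
    have h2 : t + ε/2 ∈ C := hball (by simp [Real.dist_eq]; rw [abs_of_pos (by linarith)]; linarith)
    constructor
    · exact lt_of_le_of_lt (csInf_le hbddB h1) (by linarith)
    · exact lt_of_lt_of_le (by linarith) (le_csSup hbddA h2)
  have hsub2 : Ioo a b ⊆ C := by
    intro t ht
    obtain ⟨s, hsC, hst⟩ := (csInf_lt_iff hbddB hCne).mp ht.1
    obtain ⟨s', hs'C, hs't⟩ := (lt_csSup_iff hbddA hCne).mp ht.2
    exact hCpre.Icc_subset hsC hs'C ⟨le_of_lt hst, le_of_lt hs't⟩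
  have hab : a < b := by
    have := hsub1 hx₀C; exact lt_trans this.1 this.2
  have hba : b ≤ a + 1 := by
    apply csSup_le hCne
    intro t ht
    have : ∀ s ∈ C, t - 1 < s := fun s hs => by have := hdiam s hs t ht; linarith
    have : t - 1 ≤ a := le_csInf hCne (fun s hs => le_of_lt (this s hs))
    linarith
  exact ⟨a, b, hab, hba, by rw [hUC, Subset.antisymm hsub1 hsub2]⟩


theorem spider_part2 (M : CAModel (thickSpider 6)) : ∃ u v, M.arc u ∪ M.arc v = Set.univ := by
  classical
  -- basic adjacency facts
  have hBdisj : ∀ i j : Fin 6, i ≠ j →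
      ∀ x : ArcCircle, ¬ (x ∈ M.arc (.inr i) ∧ x ∈ M.arc (.inr j)) := by
    intro i j hij x hx
    have hne : (Sum.inr i : Fin 6 ⊕ Fin 6) ≠ Sum.inr j := fun h => hij (Sum.inr_injective h)
    exact (M.adj_iff _ _ hne).mpr ⟨x, hx.1, hx.2⟩
  have hABne : ∀ i j : Fin 6, i ≠ j → (M.arc (.inl i) ∩ M.arc (.inr j)).Nonempty := by
    intro i j hij
    exact (M.adj_iff (.inl i) (.inr j) (by simp)).mp hij
  have hABdisj : ∀ i : Fin 6,
      ∀ x : ArcCircle, ¬ (x ∈ M.arc (.inl i) ∧ x ∈ M.arc (.inr i)) := by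
    intro i x hx
    exact ((M.adj_iff (.inl i) (.inr i) (by simp)).mpr ⟨x, hx.1, hx.2⟩ :
      (i ≠ i)) rfl
  -- representations
  have hrep : ∀ v : Fin 6 ⊕ Fin 6, ∃ a b : ℝ, a < b ∧ b ≤ a + 1 ∧ M.arc v = pi '' Ioo a b :=
    fun v => arc_rep (M.isOpen_arc v) (M.isConnected_arc v) (M.arc_ne_univ v)
  choose f g hfg hfg1 hIm using hrep
  set w : ℝ := g (.inr 0) with hwdef
  set W : ℝ := f (.inr 0) + 1 with hWdef
  have hwW : w ≤ W := hfg1 (.inr 0)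
  have hWw : W < w + 1 := by have := hfg (.inr 0); simp only [hWdef, hwdef]; linarith
  have hB0 : M.arc (.inr 0) = pi '' Ioo W (w + 1) := by
    rw [hIm (.inr 0)]
    have := pi_image_Ioo_translate (f (.inr 0)) (g (.inr 0)) 1
    simp only [Int.cast_one] at this
    rw [hWdef, hwdef, this]
  -- normalized representations of the five other stable arcs
  have hnorm : ∀ i : Fin 6, ∃ a b : ℝ, i ≠ 0 →
      (a < b ∧ w ≤ a ∧ b ≤ W ∧ M.arc (.inr i) = pi '' Ioo a b) := by
    intro i
    by_cases hi : i = 0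
    · exact ⟨0, 1, fun h => absurd hi h⟩
    have hdis : ∀ x, f (.inr i) < x → x < g (.inr i) →
        ∀ n : ℤ, ¬ (f (.inr 0) < x + n ∧ x + n < g (.inr 0)) := by
      intro x hx1 hx2 n hn
      have m1 : pi x ∈ M.arc (.inr i) := by
        rw [hIm (.inr i)]; exact ⟨x, ⟨hx1, hx2⟩, rfl⟩
      have m2 : pi x ∈ M.arc (.inr 0) := by
        rw [hIm (.inr 0)]; exact mem_pi_image.mpr ⟨n, hn.1, hn.2⟩
      exact hBdisj i 0 hi (pi x) ⟨m1, m2⟩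
    obtain ⟨n, hn1, hn2⟩ := gap (hfg (.inr 0)) (hfg1 (.inr 0)) (hfg (.inr i)) hdis
    refine ⟨f (.inr i) + n, g (.inr i) + n, fun _ =>
      ⟨by have := hfg (.inr i); linarith, hn1, by rw [hWdef]; exact hn2, ?_⟩⟩
    rw [hIm (.inr i)]
    exact (pi_image_Ioo_translate _ _ n).symm
  choose P Q hnorm' using hnorm
  have hPQ : ∀ i : Fin 6, i ≠ 0 → P i < Q i := fun i hi => (hnorm' i hi).1
  have hwP : ∀ i : Fin 6, i ≠ 0 → w ≤ P i := fun i hi => (hnorm' i hi).2.1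
  have hQW : ∀ i : Fin 6, i ≠ 0 → Q i ≤ W := fun i hi => (hnorm' i hi).2.2.1
  have hBrep : ∀ i : Fin 6, i ≠ 0 → M.arc (.inr i) = pi '' Ioo (P i) (Q i) :=
    fun i hi => (hnorm' i hi).2.2.2
  -- line-level disjointness of the five intervals
  have hIdisj : ∀ i j : Fin 6, i ≠ 0 → j ≠ 0 → i ≠ j →
      ∀ x, ¬(P i < x ∧ x < Q i ∧ P j < x ∧ x < Q j) := by
    intro i j hi hj hij x hx
    have m1 : pi x ∈ M.arc (.inr i) := by
      rw [hBrep i hi]; exact ⟨x, ⟨hx.1, hx.2.1⟩, rfl⟩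
    have m2 : pi x ∈ M.arc (.inr j) := by
      rw [hBrep j hj]; exact ⟨x, ⟨hx.2.2.1, hx.2.2.2⟩, rfl⟩
    exact hBdisj i j hij (pi x) ⟨m1, m2⟩
  -- sort the five intervals
  set S0 : Finset (Fin 6) := Finset.univ.erase 0 with hS0
  obtain ⟨i1, hi1S, hmin1⟩ := S0.exists_min_image P (by decide)
  set S1 : Finset (Fin 6) := S0.erase i1 with hS1
  have hS1ne : S1.Nonempty := by
    rw [← Finset.card_pos, hS1, Finset.card_erase_of_mem hi1S]
    rw [hS0]; decide
  obtain ⟨i2, hi2S, hmin2⟩ := S1.exists_min_image P hS1ne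
  set S2 : Finset (Fin 6) := S1.erase i2 with hS2
  have hS2ne : S2.Nonempty := by
    rw [← Finset.card_pos, hS2, Finset.card_erase_of_mem hi2S, hS1,
      Finset.card_erase_of_mem hi1S]
    rw [hS0]; decide
  obtain ⟨i3, hi3S, hmin3⟩ := S2.exists_min_image P hS2ne
  set S3 : Finset (Fin 6) := S2.erase i3 with hS3
  have hS3ne : S3.Nonempty := by
    rw [← Finset.card_pos, hS3, Finset.card_erase_of_mem hi3S, hS2,
      Finset.card_erase_of_mem hi2S, hS1, Finset.card_erase_of_mem hi1S]
    rw [hS0]; decide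
  obtain ⟨i4, hi4S, hmin4⟩ := S3.exists_min_image P hS3ne
  set S4 : Finset (Fin 6) := S3.erase i4 with hS4
  have hS4ne : S4.Nonempty := by
    rw [← Finset.card_pos, hS4, Finset.card_erase_of_mem hi4S, hS3,
      Finset.card_erase_of_mem hi3S, hS2, Finset.card_erase_of_mem hi2S, hS1,
      Finset.card_erase_of_mem hi1S]
    rw [hS0]; decide
  obtain ⟨i5, hi5S, -⟩ := S4.exists_min_image P hS4ne
  -- unpack memberships
  have hi5m : i5 ≠ i4 ∧ i5 ≠ i3 ∧ i5 ≠ i2 ∧ i5 ≠ i1 ∧ i5 ≠ 0 := by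
    have h4 := Finset.mem_erase.mp hi5S
    have h3 := Finset.mem_erase.mp h4.2
    have h2 := Finset.mem_erase.mp h3.2
    have h1 := Finset.mem_erase.mp h2.2
    exact ⟨h4.1, h3.1, h2.1, h1.1, (Finset.mem_erase.mp h1.2).1⟩
  have hi4m : i4 ≠ i3 ∧ i4 ≠ i2 ∧ i4 ≠ i1 ∧ i4 ≠ 0 := by
    have h3 := Finset.mem_erase.mp hi4S
    have h2 := Finset.mem_erase.mp h3.2
    have h1 := Finset.mem_erase.mp h2.2
    exact ⟨h3.1, h2.1, h1.1, (Finset.mem_erase.mp h1.2).1⟩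
  have hi3m : i3 ≠ i2 ∧ i3 ≠ i1 ∧ i3 ≠ 0 := by
    have h2 := Finset.mem_erase.mp hi3S
    have h1 := Finset.mem_erase.mp h2.2
    exact ⟨h2.1, h1.1, (Finset.mem_erase.mp h1.2).1⟩
  have hi2m : i2 ≠ i1 ∧ i2 ≠ 0 := by
    have h1 := Finset.mem_erase.mp hi2S
    exact ⟨h1.1, (Finset.mem_erase.mp h1.2).1⟩
  have hi1m : i1 ≠ 0 := (Finset.mem_erase.mp hi1S).1
  have hi4S0 : i4 ∈ S0 := (Finset.mem_erase.mp (Finset.mem_erase.mp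
    (Finset.mem_erase.mp hi4S).2).2).2
  have hi5S0 : i5 ∈ S0 := (Finset.mem_erase.mp (Finset.mem_erase.mp
    (Finset.mem_erase.mp (Finset.mem_erase.mp hi5S).2).2).2).2
  have hi3S0 : i3 ∈ S0 := (Finset.mem_erase.mp (Finset.mem_erase.mp hi3S).2).2
  have hi2S0 : i2 ∈ S0 := (Finset.mem_erase.mp hi2S).2
  have hi3S1 : i3 ∈ S1 := (Finset.mem_erase.mp hi3S).2
  have hi4S1 : i4 ∈ S1 := (Finset.mem_erase.mp (Finset.mem_erase.mp hi4S).2).2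
  have hi5S1 : i5 ∈ S1 := (Finset.mem_erase.mp (Finset.mem_erase.mp
    (Finset.mem_erase.mp hi5S).2).2).2
  have hi4S2 : i4 ∈ S2 := (Finset.mem_erase.mp hi4S).2
  have hi5S2 : i5 ∈ S2 := (Finset.mem_erase.mp (Finset.mem_erase.mp hi5S).2).2
  have hi5S3 : i5 ∈ S3 := (Finset.mem_erase.mp hi5S).2
  -- interval chain
  have hP12 : P i1 ≤ P i2 := hmin1 i2 hi2S0
  have hP23 : P i2 ≤ P i3 := hmin2 i3 hi3S1
  have hP34 : P i3 ≤ P i4 := hmin3 i4 hi4S2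
  have hP45 : P i4 ≤ P i5 := hmin4 i5 hi5S3
  have hQ12 : Q i1 ≤ P i2 :=
    ord_disj (hPQ i1 hi1m) (hPQ i2 hi2m.2)
      (fun x hx => hIdisj i1 i2 hi1m hi2m.2 (Ne.symm hi2m.1) x hx) hP12
  have hQ23 : Q i2 ≤ P i3 :=
    ord_disj (hPQ i2 hi2m.2) (hPQ i3 hi3m.2.2)
      (fun x hx => hIdisj i2 i3 hi2m.2 hi3m.2.2 (Ne.symm hi3m.1) x hx) hP23
  have hQ34 : Q i3 ≤ P i4 :=
    ord_disj (hPQ i3 hi3m.2.2) (hPQ i4 hi4m.2.2.2)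
      (fun x hx => hIdisj i3 i4 hi3m.2.2 hi4m.2.2.2 (Ne.symm hi4m.1) x hx) hP34
  have hQ45 : Q i4 ≤ P i5 :=
    ord_disj (hPQ i4 hi4m.2.2.2) (hPQ i5 hi5m.2.2.2.2)
      (fun x hx => hIdisj i4 i5 hi4m.2.2.2 hi5m.2.2.2.2 (Ne.symm hi5m.1) x hx) hP45
  -- abbreviations
  set a1 := P i1; set b1 := Q i1
  set a2 := P i2; set b2 := Q i2
  set a3 := P i3; set b3 := Q i3
  set a4 := P i4; set b4 := Q i4
  set a5 := P i5; set b5 := Q i5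
  -- normalize the clique arc A (for i2)
  have hA2dis : ∀ x, f (.inl i2) < x → x < g (.inl i2) →
      ∀ n : ℤ, ¬ (a2 < x + n ∧ x + n < b2) := by
    intro x hx1 hx2 n hn
    have m1 : pi x ∈ M.arc (.inl i2) := by rw [hIm (.inl i2)]; exact ⟨x, ⟨hx1, hx2⟩, rfl⟩
    have m2 : pi x ∈ M.arc (.inr i2) := by
      rw [hBrep i2 hi2m.2]; exact mem_pi_image.mpr ⟨n, hn.1, hn.2⟩
    exact hABdisj i2 (pi x) ⟨m1, m2⟩
  obtain ⟨n2, hn21, hn22⟩ := gap (hPQ i2 hi2m.2) (by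
      have := hQW i2 hi2m.2; have := hwP i2 hi2m.2; linarith) (hfg (.inl i2)) hA2dis
  set u : ℝ := f (.inl i2) + n2 with hudef
  set v : ℝ := g (.inl i2) + n2 with hvdef
  have huv : u < v := by have := hfg (.inl i2); simp only [hudef, hvdef]; linarith
  have hvu1 : v ≤ u + 1 := by have := hfg1 (.inl i2); simp only [hudef, hvdef]; linarith
  have hArep : M.arc (.inl i2) = pi '' Ioo u v := by
    rw [hIm (.inl i2)]; exact (pi_image_Ioo_translate _ _ n2).symm
  have hb2u : b2 ≤ u := hn21
  have hva2 : v ≤ a2 + 1 := hn22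
  -- sample point x₃ in A ∩ B i3
  obtain ⟨z3, hz3A, hz3B⟩ := hABne i2 i3 (Ne.symm hi3m.1)
  obtain ⟨x3, hx3I, hx3e⟩ := by rw [hArep] at hz3A; exact hz3A
  have hx3B : ∃ m : ℤ, x3 + m ∈ Ioo a3 b3 := by
    rw [hBrep i3 hi3m.2.2] at hz3B
    rw [← hx3e] at hz3B
    exact mem_pi_image.mp hz3B
  obtain ⟨m3, hm3⟩ := hx3B
  have hm3z : m3 = 0 := by
    have h1 : b2 < x3 := lt_of_le_of_lt hb2u hx3I.1
    have h2 : x3 < a2 + 1 := lt_of_lt_of_le hx3I.2 hva2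
    have l1 : a3 < x3 + m3 := hm3.1
    have l2 : x3 + m3 < b3 := hm3.2
    have c1 : (m3 : ℝ) < 1 := by
      have : b3 ≤ W := hQW i3 hi3m.2.2
      have : a2 ≥ w := hwP i2 hi2m.2
      have : a2 < b2 := hPQ i2 hi2m.2
      linarith [hWw]
    have c2 : (-1 : ℝ) < m3 := by
      have : b2 ≤ a3 := hQ23
      have : a2 < b2 := hPQ i2 hi2m.2
      linarith
    have : (-1 : ℤ) < m3 ∧ m3 < 1 := ⟨by exact_mod_cast c2, by exact_mod_cast c1⟩
    omega
  rw [hm3z] at hm3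
  simp only [Int.cast_zero, add_zero] at hm3
  -- sample point x₁ in A ∩ B i1 (shifted by one)
  obtain ⟨z1, hz1A, hz1B⟩ := hABne i2 i1 hi2m.1
  obtain ⟨x1, hx1I, hx1e⟩ := by rw [hArep] at hz1A; exact hz1A
  obtain ⟨m1, hm1⟩ : ∃ m : ℤ, x1 + m ∈ Ioo a1 b1 := by
    rw [hBrep i1 hi1m] at hz1B
    rw [← hx1e] at hz1B
    exact mem_pi_image.mp hz1B
  have hm1z : m1 = -1 := by
    have h1 : b2 < x1 := lt_of_le_of_lt hb2u hx1I.1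
    have h2 : x1 < a2 + 1 := lt_of_lt_of_le hx1I.2 hva2
    have c1 : (m1 : ℝ) < 0 := by
      have : b1 ≤ a2 := hQ12
      have : a2 < b2 := hPQ i2 hi2m.2
      have : x1 + m1 < b1 := hm1.2
      linarith
    have c2 : (-2 : ℝ) < m1 := by
      have l1 : a1 < x1 + m1 := hm1.1
      have : w ≤ a1 := hwP i1 hi1m
      have : a2 < b2 := hPQ i2 hi2m.2
      have : b2 ≤ W := hQW i2 hi2m.2
      linarith [hWw]
    have : (-2 : ℤ) < m1 ∧ m1 < 0 := ⟨by exact_mod_cast c2, by exact_mod_cast c1⟩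
    omega
  rw [hm1z] at hm1
  push_cast at hm1
  have hx1' : a1 + 1 < x1 ∧ x1 < b1 + 1 := by
    constructor <;> [linarith [hm1.1]; linarith [hm1.2]]
  -- normalize the clique arc A' (for i5)
  have hA5dis : ∀ x, f (.inl i5) < x → x < g (.inl i5) →
      ∀ n : ℤ, ¬ (a5 < x + n ∧ x + n < b5) := by
    intro x hx1 hx2 n hn
    have m1 : pi x ∈ M.arc (.inl i5) := by rw [hIm (.inl i5)]; exact ⟨x, ⟨hx1, hx2⟩, rfl⟩
    have m2 : pi x ∈ M.arc (.inr i5) := by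
      rw [hBrep i5 hi5m.2.2.2.2]; exact mem_pi_image.mpr ⟨n, hn.1, hn.2⟩
    exact hABdisj i5 (pi x) ⟨m1, m2⟩
  obtain ⟨n5, hn51, hn52⟩ := gap (hPQ i5 hi5m.2.2.2.2) (by
      have := hQW i5 hi5m.2.2.2.2; have := hwP i5 hi5m.2.2.2.2; linarith) (hfg (.inl i5)) hA5dis
  set u' : ℝ := f (.inl i5) + n5 with hu'def
  set v' : ℝ := g (.inl i5) + n5 with hv'def
  have huv' : u' < v' := by have := hfg (.inl i5); simp only [hu'def, hv'def]; linarith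
  have hA'rep : M.arc (.inl i5) = pi '' Ioo u' v' := by
    rw [hIm (.inl i5)]; exact (pi_image_Ioo_translate _ _ n5).symm
  have hb5u' : b5 ≤ u' := hn51
  have hv'a5 : v' ≤ a5 + 1 := hn52
  -- sample point y in A' ∩ B 0
  obtain ⟨zy, hzyA, hzyB⟩ := hABne i5 0 hi5m.2.2.2.2
  obtain ⟨y, hyI, hye⟩ := by rw [hA'rep] at hzyA; exact hzyA
  obtain ⟨my, hmy⟩ : ∃ m : ℤ, y + m ∈ Ioo W (w + 1) := by
    rw [hB0] at hzyB
    rw [← hye] at hzyB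
    exact mem_pi_image.mp hzyB
  have hmyz : my = 0 := by
    have h1 : b5 < y := lt_of_le_of_lt hb5u' hyI.1
    have h2 : y < a5 + 1 := lt_of_lt_of_le hyI.2 hv'a5
    have c1 : (my : ℝ) < 1 := by
      have : w ≤ a5 := hwP i5 hi5m.2.2.2.2
      have : a5 < b5 := hPQ i5 hi5m.2.2.2.2
      have := hmy.2
      linarith
    have c2 : (-1 : ℝ) < my := by
      have : b5 ≤ W := hQW i5 hi5m.2.2.2.2
      have : a5 < b5 := hPQ i5 hi5m.2.2.2.2
      have := hmy.1
      linarith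
    have : (-1 : ℤ) < my ∧ my < 1 := ⟨by exact_mod_cast c2, by exact_mod_cast c1⟩
    omega
  rw [hmyz] at hmy
  simp only [Int.cast_zero, add_zero] at hmy
  -- sample point x₄ in A' ∩ B i4 (shifted by one)
  obtain ⟨z4, hz4A, hz4B⟩ := hABne i5 i4 hi5m.1
  obtain ⟨x4, hx4I, hx4e⟩ := by rw [hA'rep] at hz4A; exact hz4A
  obtain ⟨m4, hm4⟩ : ∃ m : ℤ, x4 + m ∈ Ioo a4 b4 := by
    rw [hBrep i4 hi4m.2.2.2] at hz4B
    rw [← hx4e] at hz4B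
    exact mem_pi_image.mp hz4B
  have hm4z : m4 = -1 := by
    have h1 : b5 < x4 := lt_of_le_of_lt hb5u' hx4I.1
    have h2 : x4 < a5 + 1 := lt_of_lt_of_le hx4I.2 hv'a5
    have c1 : (m4 : ℝ) < 0 := by
      have : b4 ≤ a5 := hQ45
      have : a5 < b5 := hPQ i5 hi5m.2.2.2.2
      have := hm4.2
      linarith
    have c2 : (-2 : ℝ) < m4 := by
      have : w ≤ a4 := hwP i4 hi4m.2.2.2
      have : a5 < b5 := hPQ i5 hi5m.2.2.2.2
      have : b5 ≤ W := hQW i5 hi5m.2.2.2.2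
      have := hm4.1
      linarith [hWw]
    have : (-2 : ℤ) < m4 ∧ m4 < 0 := ⟨by exact_mod_cast c2, by exact_mod_cast c1⟩
    omega
  rw [hm4z] at hm4
  push_cast at hm4
  have hx4' : a4 + 1 < x4 ∧ x4 < b4 + 1 := by
    constructor <;> [linarith [hm4.1]; linarith [hm4.2]]
  -- final covering argument
  refine ⟨.inl i2, .inl i5, ?_⟩
  rw [hArep, hA'rep]
  rw [Set.eq_univ_iff_forall]
  intro z
  obtain ⟨t0, rfl⟩ := pi_surjective z
  set k : ℤ := ⌊t0 - u⌋ with hk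
  set t : ℝ := t0 - k with ht
  have hte : pi t0 = pi t := by
    rw [ht, sub_eq_add_neg, show -(k:ℝ) = ((-k : ℤ) : ℝ) by push_cast; ring, pi_add_int]
  have htu : u ≤ t := by
    have := Int.floor_le (t0 - u); simp only [ht, hk]; linarith
  have htu1 : t < u + 1 := by
    have := Int.lt_floor_add_one (t0 - u); simp only [ht, hk]; linarith
  -- useful bounds
  have key1 : w + 1 < u + 1 := by
    have : a2 ≥ w := hwP i2 hi2m.2
    have : a2 < b2 := hPQ i2 hi2m.2
    linarith
  have key2 : u + 1 < x4 := by
    have : u < x3 := hx3I.1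
    have : x3 < b3 := hm3.2
    have : b3 ≤ a4 := hQ34
    linarith [hx4'.1]
  have hyu' : u' < y := hyI.1
  have hyv' : y < v' := hyI.2
  have hyw1 : y < w + 1 := hmy.2
  have hx4v' : x4 < v' := hx4I.2
  by_cases hcase : u < t ∧ t < v
  · left
    rw [hte]
    exact ⟨t, hcase, rfl⟩
  · right
    rw [hte]
    have hx1w : w + 1 < x1 := by
      have : w ≤ a1 := hwP i1 hi1m
      linarith [hx1'.1]
    rcases not_and_or.mp hcase with hle | hge
    · push_neg at hle
      have htequ : t = u := le_antisymm hle htu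
      have e : pi (u + 1) = pi u := by
        have h := pi_add_int u 1
        push_cast at h
        exact h
      refine ⟨u + 1, ⟨?_, ?_⟩, ?_⟩
      · linarith
      · linarith
      · rw [htequ]; exact e
    · push_neg at hge
      refine ⟨t, ⟨?_, ?_⟩, rfl⟩
      · have : v > x1 := hx1I.2
        linarith
      · linarith

end Spider

theorem thickSpider6_B2_EPR_not_NCA :
    IsBkEPR (thickSpider 6) 2 ∧
    ∀ M : CAModel (thickSpider 6), ∃ u v, M.arc u ∪ M.arc v = Set.univ := by
  exact ⟨spider_part1, Spider.spider_part2⟩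
end

section
/- Let G be a finite, connected, simple graph that is not chordal, and suppose G admits an NHCA model together with four points of the circle, each distinct from every endpoint of every arc of the model, such that no arc of the model contains two of these four points. Then G has four pairwise disjoint nonempty complete subgraphs H_1, H_2, H_3, H_4 such that H_1 and H_3 lie in different connected components of G − (V(H_2) ∪ V(H_4)) and H_2 and H_4 lie in different connected components of G − (V(H_1) ∪ V(H_3)). -/
open SimpleGraph

section Aux

open Set

/-! ### Basic facts about the quotient map `ℝ → ArcCircle` -/

lemma arcCoe_inj {t r s : ℝ} (hr : r ∈ Set.Ico t (t+1)) (hs : s ∈ Set.Ico t (t+1))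
    (h : (r : ArcCircle) = (s : ArcCircle)) : r = s :=
  (AddCircle.coe_eq_coe_iff_of_mem_Ico hr hs).mp h

lemma arcCoe_exists_rep_Ico (t : ℝ) (x : ArcCircle) :
    ∃ r ∈ Set.Ico t (t+1), (r : ArcCircle) = x := by
  have h : x ∈ ((↑) : ℝ → ArcCircle) '' Set.Ico t (t+1) := by
    rw [AddCircle.coe_image_Ico_eq]; trivial
  exact h

lemma arcCoe_exists_rep_Ioo (t : ℝ) (x : ArcCircle) (hx : x ≠ (t : ArcCircle)) :
    ∃ r ∈ Set.Ioo t (t+1), (r : ArcCircle) = x := by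
  obtain ⟨r, hr, rfl⟩ := arcCoe_exists_rep_Ico t x
  refine ⟨r, ⟨lt_of_le_of_ne hr.1 ?_, hr.2⟩, rfl⟩
  rintro rfl
  exact hx rfl

lemma arcCoe_continuous : Continuous ((↑) : ℝ → ArcCircle) := continuous_quotient_mk'

lemma arcCoe_isOpenMap : IsOpenMap ((↑) : ℝ → ArcCircle) := QuotientAddGroup.isOpenMap_coe

/-! ### Lifting arcs that avoid a point to subsets of `ℝ` -/

/-- The lift of a subset of the circle avoiding `↑t` to the interval `(t, t+1)`. -/
def liftArc (t : ℝ) (I : Set ArcCircle) : Set ℝ :=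
  ((↑) : ℝ → ArcCircle) ⁻¹' I ∩ Set.Ioo t (t+1)

lemma liftArc_isOpen (t : ℝ) {I : Set ArcCircle} (hI : IsOpen I) : IsOpen (liftArc t I) :=
  (hI.preimage arcCoe_continuous).inter isOpen_Ioo

lemma liftArc_inter_nonempty (t : ℝ) {I J : Set ArcCircle} (hI : (t : ArcCircle) ∉ I) :
    (liftArc t I ∩ liftArc t J).Nonempty ↔ (I ∩ J).Nonempty := by
  constructor
  · rintro ⟨r, ⟨hrI, -⟩, ⟨hrJ, -⟩⟩
    exact ⟨(r : ArcCircle), hrI, hrJ⟩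
  · rintro ⟨x, hxI, hxJ⟩
    obtain ⟨r, hr, rfl⟩ := arcCoe_exists_rep_Ioo t x (fun h => hI (h ▸ hxI))
    exact ⟨r, ⟨hxI, hr⟩, ⟨hxJ, hr⟩⟩

lemma liftArc_preconnected (t : ℝ) {I : Set ArcCircle} (hpre : IsPreconnected I)
    (hIopen : IsOpen I) (ht : (t : ArcCircle) ∉ I) : IsPreconnected (liftArc t I) := by
  intro u v hu hv hsub hnu hnv
  set A : Set ArcCircle := ((↑) : ℝ → ArcCircle) '' (liftArc t I ∩ u) with hA_def
  set B : Set ArcCircle := ((↑) : ℝ → ArcCircle) '' (liftArc t I ∩ v) with hB_def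
  have hA : IsOpen A := arcCoe_isOpenMap _ ((liftArc_isOpen t hIopen).inter hu)
  have hB : IsOpen B := arcCoe_isOpenMap _ ((liftArc_isOpen t hIopen).inter hv)
  have hIsub : I ⊆ A ∪ B := by
    intro x hx
    obtain ⟨r, hr, rfl⟩ := arcCoe_exists_rep_Ioo t x (fun h => ht (h ▸ hx))
    have hrl : r ∈ liftArc t I := ⟨hx, hr⟩
    rcases hsub hrl with h | h
    · exact Or.inl ⟨r, ⟨hrl, h⟩, rfl⟩
    · exact Or.inr ⟨r, ⟨hrl, h⟩, rfl⟩
  have hIA : (I ∩ A).Nonempty := by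
    obtain ⟨r, hrl, hru⟩ := hnu
    exact ⟨(r : ArcCircle), hrl.1, ⟨r, ⟨hrl, hru⟩, rfl⟩⟩
  have hIB : (I ∩ B).Nonempty := by
    obtain ⟨r, hrl, hrv⟩ := hnv
    exact ⟨(r : ArcCircle), hrl.1, ⟨r, ⟨hrl, hrv⟩, rfl⟩⟩
  obtain ⟨x, -, ⟨r1, hr1, hr1x⟩, ⟨r2, hr2, hr2x⟩⟩ := hpre A B hA hB hIsub hIA hIB
  have hEq : r1 = r2 := by
    apply arcCoe_inj (Set.Ioo_subset_Ico_self hr1.1.2) (Set.Ioo_subset_Ico_self hr2.1.2)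
    rw [hr1x, hr2x]
  exact ⟨r1, hr1.1, hr1.2, hEq ▸ hr2.2⟩

/-! ### No "interval" representation of a chordless cycle on the real line -/

lemma preconnected_uIcc_subset {s : Set ℝ} (h : IsPreconnected s) {a b : ℝ}
    (ha : a ∈ s) (hb : b ∈ s) : Set.uIcc a b ⊆ s := by
  rcases le_total a b with hab | hab
  · rw [Set.uIcc_of_le hab]; exact h.Icc_subset ha hb
  · rw [Set.uIcc_of_ge hab]; exact h.Icc_subset hb ha

lemma no_real_cycle {m : ℕ} (hm : 4 ≤ m) (L : ℕ → Set ℝ)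
    (hopen : ∀ j, j < m → IsOpen (L j))
    (hpre : ∀ j, j < m → IsPreconnected (L j))
    (hadj : ∀ j k, j < m → k < m → j ≠ k →
      ((L j ∩ L k).Nonempty ↔
        min ((j : ℤ) - (k : ℤ)).natAbs (m - ((j : ℤ) - (k : ℤ)).natAbs) ≤ 1)) :
    False := by
  have h01 : (L 0 ∩ L 1).Nonempty :=
    (hadj 0 1 (by omega) (by omega) (by omega)).mpr (by push_cast; omega)
  have h12 : (L 1 ∩ L 2).Nonempty :=
    (hadj 1 2 (by omega) (by omega) (by omega)).mpr (by push_cast; omega)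
  have hwrap : (L (m-1) ∩ L 0).Nonempty :=
    (hadj (m-1) 0 (by omega) (by omega) (by omega)).mpr (by push_cast [Nat.cast_sub]; omega)
  have hcons : ∀ k, 2 ≤ k → k + 1 ≤ m - 1 → (L k ∩ L (k+1)).Nonempty := by
    intro k hk hk1
    exact (hadj k (k+1) (by omega) (by omega) (by omega)).mpr (by push_cast; omega)
  have h02 : ∀ z, z ∈ L 0 → z ∈ L 2 → False := by
    intro z hz0 hz2
    have := (hadj 0 2 (by omega) (by omega) (by omega)).mp ⟨z, hz0, hz2⟩
    push_cast at this; omega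
  have h1j : ∀ j, 3 ≤ j → j ≤ m - 1 → ∀ z, z ∈ L 1 → z ∈ L j → False := by
    intro j hj3 hjm z hz1 hzj
    have := (hadj 1 j (by omega) (by omega) (by omega)).mp ⟨z, hz1, hzj⟩
    push_cast at this; omega
  obtain ⟨x1, hx1⟩ := h01
  obtain ⟨x3, hx3⟩ := h12
  set U : ℕ → Set ℝ := fun k => ⋃ j ∈ Finset.Icc 2 k, L j with hU_def
  have hUmem : ∀ j k, 2 ≤ j → j ≤ k → L j ⊆ U k := by
    intro j k h2 hk z hz
    exact Set.mem_biUnion (Finset.mem_Icc.mpr ⟨h2, hk⟩) hz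
  have hUpre : ∀ k, 2 ≤ k → k ≤ m - 1 → IsPreconnected (U k) := by
    intro k hk
    induction k, hk using Nat.le_induction with
    | base =>
      intro _
      have : U 2 = L 2 := by
        have h2 : ∀ j : ℕ, (2 ≤ j ∧ j ≤ 2) ↔ j = 2 := fun j => by omega
        ext z
        simp [hU_def, h2]
      rw [this]; exact hpre 2 (by omega)
    | succ k hk ih =>
      intro hk1
      have hUeq : U (k+1) = L (k+1) ∪ U k := by
        ext z
        simp only [hU_def, Set.mem_iUnion, Set.mem_union, Finset.mem_Icc, exists_prop]
        constructor
        · rintro ⟨j, ⟨h2, hk1⟩, hz⟩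
          rcases eq_or_lt_of_le hk1 with rfl | hlt
          · exact Or.inl hz
          · exact Or.inr ⟨j, ⟨h2, by omega⟩, hz⟩
        · rintro (hz | ⟨j, ⟨h2, hjk⟩, hz⟩)
          · exact ⟨k+1, ⟨by omega, le_rfl⟩, hz⟩
          · exact ⟨j, ⟨h2, by omega⟩, hz⟩
      obtain ⟨pt, hptk, hptk1⟩ := hcons k hk hk1
      rw [hUeq]
      exact IsPreconnected.union pt hptk1 (hUmem k k hk le_rfl hptk)
        (hpre (k+1) (by omega)) (ih (by omega))
  -- the long chain around the cycle
  obtain ⟨y, hym, hy0⟩ := hwrap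
  have hVpre : IsPreconnected (L 0 ∪ U (m-1)) :=
    IsPreconnected.union y hy0 (hUmem (m-1) (m-1) (by omega) le_rfl hym)
      (hpre 0 (by omega)) (hUpre (m-1) (by omega) le_rfl)
  have hx1V : x1 ∈ L 0 ∪ U (m-1) := Or.inl hx1.1
  have hx3V : x3 ∈ L 0 ∪ U (m-1) := Or.inr (hUmem 2 (m-1) le_rfl (by omega) hx3.2)
  have hsegV : Set.uIcc x1 x3 ⊆ L 0 ∪ U (m-1) := preconnected_uIcc_subset hVpre hx1V hx3V
  have hseg1 : Set.uIcc x1 x3 ⊆ L 1 := preconnected_uIcc_subset (hpre 1 (by omega)) hx1.2 hx3.1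
  have hz : ∃ z ∈ Set.uIcc x1 x3, z ∉ L 0 ∪ L 2 := by
    by_contra hcov
    push_neg at hcov
    obtain ⟨z, -, hz0, hz2⟩ := isPreconnected_uIcc (L 0) (L 2) (hopen 0 (by omega))
      (hopen 2 (by omega)) hcov ⟨x1, Set.left_mem_uIcc, hx1.1⟩ ⟨x3, Set.right_mem_uIcc, hx3.2⟩
    exact h02 z hz0 hz2
  obtain ⟨z, hzseg, hznot⟩ := hz
  have hz1 : z ∈ L 1 := hseg1 hzseg
  rcases hsegV hzseg with hzL0 | hzU
  · exact hznot (Or.inl hzL0)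
  · obtain ⟨j, hjmem, hzj⟩ := Set.mem_iUnion₂.mp hzU
    have hj : 2 ≤ j ∧ j ≤ m - 1 := Finset.mem_Icc.mp hjmem
    rcases eq_or_lt_of_le hj.1 with hj2 | hj3
    · exact hznot (Or.inr (hj2 ▸ hzj))
    · exact h1j j hj3 hj.2 z hz1 hzj

/-! ### Every point of the circle is covered by some arc -/

lemma exists_arc_mem {V : Type*} {G : SimpleGraph V} (M : CAModel G)
    (hchordal : ¬ IsChordal G) (q : ArcCircle) : ∃ v, q ∈ M.arc v := by
  by_contra hq
  push_neg at hq
  rw [IsChordal] at hchordal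
  push_neg at hchordal
  obtain ⟨m, hm, hsub⟩ := hchordal
  obtain ⟨e⟩ := hsub
  obtain ⟨t, -, htq⟩ := arcCoe_exists_rep_Ico 0 q
  have hq' : ∀ v, (t : ArcCircle) ∉ M.arc v := fun v h => hq v (htq ▸ h)
  set L : ℕ → Set ℝ := fun j => if h : j < m then liftArc t (M.arc (e ⟨j, h⟩)) else ∅ with hL_def
  refine no_real_cycle hm L ?_ ?_ ?_
  · intro j hj
    simp only [hL_def, dif_pos hj]
    exact liftArc_isOpen t (M.isOpen_arc _)
  · intro j hj
    simp only [hL_def, dif_pos hj]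
    exact liftArc_preconnected t (M.isConnected_arc _).isPreconnected (M.isOpen_arc _) (hq' _)
  · intro j k hj hk hjk
    simp only [hL_def, dif_pos hj, dif_pos hk]
    rw [liftArc_inter_nonempty t (hq' _)]
    have hne : (⟨j, hj⟩ : Fin m) ≠ ⟨k, hk⟩ := Fin.ne_of_val_ne hjk
    rw [← M.adj_iff _ _ (e.injective.ne hne), e.map_adj_iff]
    constructor
    · intro h; exact h.2
    · intro h; exact ⟨hne, h⟩

/-! ### Separation of the circle by two points -/

lemma separation_aux {V : Type*} (G : SimpleGraph V) (M : CAModel G) {c d : ℝ}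
    (hcd : c < d) (hdc : d < c + 1) (X : Set V)
    (hXc : ∀ v, v ∈ (Xᶜ : Set V) → ((c : ℝ) : ArcCircle) ∉ M.arc v)
    (hXd : ∀ v, v ∈ (Xᶜ : Set V) → ((d : ℝ) : ArcCircle) ∉ M.arc v)
    {a b : V} (ha : a ∈ (Xᶜ : Set V)) (hb : b ∈ (Xᶜ : Set V))
    (haB : ∃ r ∈ Set.Ioo d (c+1), ((r : ℝ) : ArcCircle) ∈ M.arc a)
    (hbA : ∃ r ∈ Set.Ioo c d, ((r : ℝ) : ArcCircle) ∈ M.arc b) :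
    ¬ (G.induce (Xᶜ : Set V)).Reachable ⟨a, ha⟩ ⟨b, hb⟩ := by
  set A : Set ArcCircle := ((↑) : ℝ → ArcCircle) '' Set.Ioo c d with hA_def
  set B : Set ArcCircle := ((↑) : ℝ → ArcCircle) '' Set.Ioo d (c+1) with hB_def
  have hAopen : IsOpen A := arcCoe_isOpenMap _ isOpen_Ioo
  have hBopen : IsOpen B := arcCoe_isOpenMap _ isOpen_Ioo
  have hdisj : ∀ x, x ∈ A → x ∈ B → False := by
    rintro x ⟨r, hr, rfl⟩ ⟨s, hs, hsx⟩
    have : s = r := arcCoe_inj ⟨(hcd.trans hs.1).le, hs.2⟩ ⟨hr.1.le, hr.2.trans hdc⟩ hsx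
    subst this
    exact absurd hr.2 (not_lt.mpr hs.1.le)
  have hside : ∀ v, v ∈ (Xᶜ : Set V) → M.arc v ⊆ A ∨ M.arc v ⊆ B := by
    intro v hv
    have hsub : M.arc v ⊆ A ∪ B := by
      intro x hx
      obtain ⟨r, hr, rfl⟩ := arcCoe_exists_rep_Ioo c x (fun h => hXc v hv (h ▸ hx))
      have hrd : r ≠ d := fun h => hXd v hv (h ▸ hx)
      rcases lt_or_gt_of_ne hrd with h | h
      · exact Or.inl ⟨r, ⟨hr.1, h⟩, rfl⟩
      · exact Or.inr ⟨r, ⟨h, hr.2⟩, rfl⟩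
    exact (M.isConnected_arc v).isPreconnected.subset_or_subset hAopen hBopen
      (Set.disjoint_left.mpr (fun {x} hxA hxB => hdisj x hxA hxB)) hsub
  intro hreach
  obtain ⟨w⟩ := hreach
  have key : ∀ (u v : ↑(Xᶜ : Set V)) (_ : (G.induce (Xᶜ : Set V)).Walk u v),
      M.arc ↑u ⊆ B → M.arc ↑v ⊆ B := by
    intro u v w
    induction w with
    | nil => exact id
    | @cons u u' v h p ih =>
      intro hu
      apply ih
      have hadj : G.Adj ↑u ↑u' := by simpa using h
      obtain ⟨x, hxu, hxu'⟩ := (M.adj_iff _ _ hadj.ne).mp hadj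
      rcases hside _ u'.2 with hA | hB
      · exact absurd (hu hxu) (fun hc => hdisj x (hA hxu') hc)
      · exact hB
  have haB' : M.arc a ⊆ B := by
    obtain ⟨r, hr, hrmem⟩ := haB
    rcases hside a ha with hA | hB
    · exact absurd (hA hrmem) (fun hc => hdisj _ hc ⟨r, hr, rfl⟩)
    · exact hB
  obtain ⟨r, hr, hrmem⟩ := hbA
  exact hdisj _ ⟨r, hr, rfl⟩ (key _ _ w haB' hrmem)

end Aux

theorem fourPoints_implies_fourCliques {V : Type*} [Fintype V] (G : SimpleGraph V)
    (hconn : G.Connected) (hchordal : ¬ IsChordal G)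
    (h : ∃ M : CAModel G, M.NHCA ∧ FourPointsProperty M) :
    ∃ S : Fin 4 → Set V, FourSeparating G S ∧ ∀ i, G.IsClique (S i) := by
  obtain ⟨M, -, p, hpinj, -, hptwo⟩ := h
  have hrep : ∀ i, ∃ r, r ∈ Set.Ico (0:ℝ) 1 ∧ (r : ArcCircle) = p i := by
    intro i
    obtain ⟨r, hr, hrp⟩ := arcCoe_exists_rep_Ico 0 (p i)
    exact ⟨r, by rwa [zero_add] at hr, hrp⟩
  choose r hr hrp using hrep
  have hrinj : Function.Injective r := by
    intro i j hij
    exact hpinj (by rw [← hrp i, ← hrp j, hij])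
  set σ := Tuple.sort r with hσ
  have hmono : StrictMono (r ∘ σ) :=
    (Tuple.monotone_sort r).strictMono_of_injective (hrinj.comp σ.injective)
  set q : Fin 4 → ArcCircle := fun i => p (σ i) with hq_def
  set x : Fin 4 → ℝ := fun i => r (σ i) with hx_def
  have hx01 : (0:ℝ) ≤ x 0 := (hr (σ 0)).1
  have hxlt1 : ∀ i, x i < 1 := fun i => (hr (σ i)).2
  have hxnn : ∀ i, (0:ℝ) ≤ x i := fun i => (hr (σ i)).1
  have hxq : ∀ i, (x i : ArcCircle) = q i := fun i => hrp (σ i)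
  have h01 : x 0 < x 1 := hmono (show (0 : Fin 4) < 1 by decide)
  have h12 : x 1 < x 2 := hmono (show (1 : Fin 4) < 2 by decide)
  have h23 : x 2 < x 3 := hmono (show (2 : Fin 4) < 3 by decide)
  set S : Fin 4 → Set V := fun i => {v | q i ∈ M.arc v} with hS_def
  have hSmem : ∀ i v, v ∈ S i ↔ q i ∈ M.arc v := fun i v => Iff.rfl
  refine ⟨S, ⟨?_, ?_, ?_, ?_⟩, ?_⟩
  · -- pairwise disjoint
    intro i j hij
    refine Set.disjoint_left.mpr (fun {v} hvi hvj => ?_)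
    exact hptwo v (σ i) (σ j) (fun hc => hij (σ.injective hc)) ⟨hvi, hvj⟩
  · -- nonempty
    intro i
    obtain ⟨v, hv⟩ := exists_arc_mem M hchordal (q i)
    exact ⟨v, hv⟩
  · -- SeparatedIn G (S 1 ∪ S 3) (S 0) (S 2)
    intro a b ha hb ha0 hb2
    have hXc : ∀ v, v ∈ ((S 1 ∪ S 3)ᶜ : Set V) → ((x 1 : ℝ) : ArcCircle) ∉ M.arc v := by
      intro v hv hc
      exact hv (Or.inl ((hSmem 1 v).mpr (hxq 1 ▸ hc)))
    have hXd : ∀ v, v ∈ ((S 1 ∪ S 3)ᶜ : Set V) → ((x 3 : ℝ) : ArcCircle) ∉ M.arc v := by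
      intro v hv hc
      exact hv (Or.inr ((hSmem 3 v).mpr (hxq 3 ▸ hc)))
    refine separation_aux G M (h12.trans h23) ?_ (S 1 ∪ S 3) hXc hXd ha hb ?_ ?_
    · linarith [hxlt1 3, hxnn 1]
    · refine ⟨x 0 + 1, ⟨by linarith [hxlt1 3], by linarith⟩, ?_⟩
      rw [AddCircle.coe_add_period 1 (x 0), hxq 0]
      exact ha0
    · exact ⟨x 2, ⟨h12, h23⟩, hxq 2 ▸ hb2⟩
  · -- SeparatedIn G (S 0 ∪ S 2) (S 1) (S 3)
    intro a b ha hb ha1 hb3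
    have hXc : ∀ v, v ∈ ((S 0 ∪ S 2)ᶜ : Set V) → ((x 0 : ℝ) : ArcCircle) ∉ M.arc v := by
      intro v hv hc
      exact hv (Or.inl ((hSmem 0 v).mpr (hxq 0 ▸ hc)))
    have hXd : ∀ v, v ∈ ((S 0 ∪ S 2)ᶜ : Set V) → ((x 2 : ℝ) : ArcCircle) ∉ M.arc v := by
      intro v hv hc
      exact hv (Or.inr ((hSmem 2 v).mpr (hxq 2 ▸ hc)))
    intro hreach
    refine separation_aux G M (h01.trans h12) ?_ (S 0 ∪ S 2) hXc hXd hb ha ?_ ?_ hreach.symm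
    · linarith [hxlt1 2, hxnn 0]
    · refine ⟨x 3, ⟨h23, by linarith [hxlt1 3, hxnn 0]⟩, ?_⟩
      exact hxq 3 ▸ hb3
    · exact ⟨x 1, ⟨h01, h12⟩, hxq 1 ▸ ha1⟩
  · -- cliques
    intro i u hu v hv huv
    exact (M.adj_iff u v huv).mpr ⟨q i, hu, hv⟩
end

section
/- For all integers k ≥ 2 and n ≥ 3 with 3k < n < 4k, the power of a cycle C_n^k contains some power of a cycle C_{4t-1}^t with t ≥ 2 as an induced subgraph. -/
open SimpleGraph

lemma my_div_add_div_le {m : ℕ} (hm : 0 < m) (a b : ℕ) : a / m + b / m ≤ (a + b) / m := by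
  rw [Nat.le_div_iff_mul_le hm, add_mul]
  exact Nat.add_le_add (Nat.div_mul_le_self a m) (Nat.div_mul_le_self b m)

lemma my_div_le_div_add_ceil {m : ℕ} (hm : 0 < m) (a b : ℕ) :
    (a + b) / m ≤ a / m + (b + (m - 1)) / m := by
  conv_lhs => rw [← Nat.div_add_mod a m]
  rw [add_assoc, Nat.mul_add_div hm]
  have h1 : (a % m + b) / m ≤ (b + (m - 1)) / m := by
    apply Nat.div_le_div_right
    have := Nat.mod_lt a hm
    omega
  omega

lemma my_cycDist_eq {N : ℕ} (i j : Fin N) (h : j.val ≤ i.val) :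
    cycDist N i j = min (i.val - j.val) (N - (i.val - j.val)) := by
  unfold cycDist
  have : ((i.val : ℤ) - (j.val : ℤ)).natAbs = i.val - j.val := by omega
  rw [this]

lemma my_cycDist_comm (N : ℕ) (i j : Fin N) : cycDist N i j = cycDist N j i := by
  unfold cycDist
  have : ((i.val : ℤ) - (j.val : ℤ)).natAbs = ((j.val : ℤ) - (i.val : ℤ)).natAbs := by omega
  rw [this]

lemma my_core_arith (n k t m e D : ℕ) (hm : m = 4 * t - 1) (ht : 2 ≤ t) (hkn : k < n)
    (hA : t * n ≤ k * m) (hB : (k + 1) * m ≤ (t + 1) * n)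
    (he1 : 1 ≤ e) (hem : e ≤ m - 1)
    (hlo : e * n / m ≤ D) (hhi : D ≤ (e * n + (m - 1)) / m) (hDn : D ≤ n) :
    (min D (n - D) ≤ k ↔ min e (m - e) ≤ t) := by
  have hm_pos : 0 < m := by omega
  have hmz : (m : ℤ) = 4 * t - 1 := by omega
  have hAz : (t : ℤ) * n ≤ k * m := by exact_mod_cast hA
  have hBz : ((k : ℤ) + 1) * m ≤ ((t : ℤ) + 1) * n := by exact_mod_cast hB
  rcases le_or_gt e t with h1 | h1
  · -- e ≤ t : D ≤ k
    have hk1 : D ≤ k := by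
      refine le_trans hhi ?_
      have hlt : e * n + (m - 1) < (k + 1) * m := by
        have h2 : e * n ≤ t * n := Nat.mul_le_mul_right n h1
        zify [show 1 ≤ m from hm_pos] at *
        linarith
      exact Nat.lt_succ_iff.mp (Nat.div_lt_of_lt_mul (by linarith [hlt]))
    omega
  · rcases le_or_gt (m - e) t with h2 | h2
    · -- n - k ≤ D
      have hk2 : n - k ≤ D := by
        refine le_trans ?_ hlo
        rw [Nat.le_div_iff_mul_le hm_pos]
        have h3 : (m - e) * n ≤ t * n := Nat.mul_le_mul_right n h2
        zify [show e ≤ m by omega, show k ≤ n by omega] at *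
        nlinarith
      omega
    · -- middle: k + 1 ≤ D and D < n - k
      have hk3 : k + 1 ≤ D := by
        refine le_trans ?_ hlo
        rw [Nat.le_div_iff_mul_le hm_pos]
        have h3 : (t + 1) * n ≤ e * n := Nat.mul_le_mul_right n (by omega)
        linarith
      have hk4 : D < n - k := by
        refine lt_of_le_of_lt hhi ?_
        apply Nat.div_lt_of_lt_mul
        have h3 : e * n ≤ (m - (t + 1)) * n := Nat.mul_le_mul_right n (by omega)
        zify [show t + 1 ≤ m by omega, show k ≤ n by omega, show 1 ≤ m from hm_pos] at *
        nlinarith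
      omega

lemma my_key_embed (n k t : ℕ) (ht : 2 ≤ t) (hkn : k < n) (htk : t ≤ k)
    (hA : t * n ≤ k * (4 * t - 1)) (hB : (k + 1) * (4 * t - 1) ≤ (t + 1) * n) :
    InducedSub (cyclePower (4 * t - 1) t) (cyclePower n k) := by
  set m := 4 * t - 1 with hm
  have hm_pos : 0 < m := by omega
  have hn_pos : 0 < n := by omega
  have hmn : m ≤ n := by
    have h1 : (t + 1) * n ≤ (k + 1) * n := Nat.mul_le_mul_right n (by omega)
    have h2 : (k + 1) * m ≤ (k + 1) * n := le_trans hB h1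
    exact Nat.le_of_mul_le_mul_left h2 (by omega)
  have hval : ∀ i : Fin m, i.val * n / m < n := fun i => by
    apply Nat.div_lt_of_lt_mul
    exact mul_lt_mul_of_pos_right i.isLt hn_pos
  set f : Fin m → Fin n := fun i => ⟨i.val * n / m, hval i⟩ with hf
  have hfv : ∀ i : Fin m, (f i).val = i.val * n / m := fun i => rfl
  have hmono : ∀ a b : Fin m, a.val < b.val → (f a).val < (f b).val := by
    intro a b hab
    rw [hfv, hfv]
    have h1 : a.val * n + m ≤ b.val * n := by
      have h2 : (a.val + 1) * n ≤ b.val * n := Nat.mul_le_mul_right n hab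
      have h3 : a.val * n + n = (a.val + 1) * n := by ring
      omega
    calc a.val * n / m < a.val * n / m + 1 := Nat.lt_succ_self _
    _ = (a.val * n + m) / m := (Nat.add_div_right _ hm_pos).symm
    _ ≤ b.val * n / m := Nat.div_le_div_right h1
  have hinj : Function.Injective f := by
    intro a b hab
    by_contra hne
    have hv : a.val ≠ b.val := fun h => hne (Fin.ext h)
    rcases Nat.lt_or_ge a.val b.val with h | h
    · exact absurd (congrArg Fin.val hab) (Nat.ne_of_lt (hmono a b h))
    · exact absurd (congrArg Fin.val hab).symm (Nat.ne_of_lt (hmono b a (by omega)))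
  have core : ∀ a b : Fin m, b.val < a.val →
      (cycDist n (f a) (f b) ≤ k ↔ cycDist m a b ≤ t) := by
    intro a b hba
    have hfba : (f b).val ≤ (f a).val := le_of_lt (hmono b a hba)
    rw [my_cycDist_eq a b (le_of_lt hba), my_cycDist_eq (f a) (f b) hfba]
    have heq : b.val * n + (a.val - b.val) * n = a.val * n := by
      rw [← add_mul]; congr 1; omega
    have hlo : (a.val - b.val) * n / m ≤ (f a).val - (f b).val := by
      have h := my_div_add_div_le hm_pos (b.val * n) ((a.val - b.val) * n)
      rw [heq] at h
      rw [hfv, hfv]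
      exact Nat.le_sub_of_add_le (by linarith)
    have hhi : (f a).val - (f b).val ≤ ((a.val - b.val) * n + (m - 1)) / m := by
      have h := my_div_le_div_add_ceil hm_pos (b.val * n) ((a.val - b.val) * n)
      rw [heq] at h
      rw [hfv, hfv]
      exact Nat.sub_le_iff_le_add.mpr (by linarith)
    exact my_core_arith n k t m (a.val - b.val) ((f a).val - (f b).val) hm ht hkn
      hA hB
      (by omega) (by have := a.isLt; omega) hlo hhi
      (le_trans (Nat.sub_le _ _) (le_of_lt (f a).isLt))
  have main : ∀ a b : Fin m, a ≠ b →
      (cycDist n (f a) (f b) ≤ k ↔ cycDist m a b ≤ t) := by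
    intro a b hab
    rcases lt_trichotomy b.val a.val with h | h | h
    · exact core a b h
    · exact absurd (Fin.ext h.symm) hab
    · rw [my_cycDist_comm n, my_cycDist_comm m]
      exact core b a h
  refine ⟨⟨⟨f, hinj⟩, ?_⟩⟩
  intro a b
  show (f a ≠ f b ∧ cycDist n (f a) (f b) ≤ k) ↔ (a ≠ b ∧ cycDist m a b ≤ t)
  constructor
  · rintro ⟨hne, hd⟩
    have hab : a ≠ b := fun h => hne (congrArg f h)
    exact ⟨hab, (main a b hab).mp hd⟩
  · rintro ⟨hab, hd⟩
    exact ⟨fun h => hab (hinj h), (main a b hab).mpr hd⟩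

theorem cyclePower_contains_some_cyclePower (k n : ℕ)
    (hk : 2 ≤ k) (hn3 : 3 ≤ n) (h1 : 3 * k < n) (h2 : n < 4 * k) :
    ∃ t : ℕ, 2 ≤ t ∧ InducedSub (cyclePower (4 * t - 1) t) (cyclePower n k) := by
  obtain ⟨k', rfl⟩ : ∃ k', k = k' + 1 := ⟨k - 1, by omega⟩
  obtain ⟨d, hd⟩ : ∃ d : ℕ, d = 4 * (k' + 1) - n := ⟨_, rfl⟩
  have hd1 : 1 ≤ d := by omega
  have hdk : d ≤ k' := by omega
  obtain ⟨q, hq⟩ : ∃ q : ℕ, q = k' / d := ⟨_, rfl⟩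
  have hdm : d * q + k' % d = k' := by rw [hq]; exact Nat.div_add_mod k' d
  have hmod : k' % d < d := Nat.mod_lt _ (by omega)
  have hq1 : 1 ≤ q := by
    rw [hq]
    exact (Nat.one_le_div_iff (by omega)).mpr hdk
  obtain ⟨t, htdef⟩ : ∃ t : ℕ, t = q + 1 := ⟨_, rfl⟩
  refine ⟨t, by omega, ?_⟩
  have hcm : d * q = q * d := mul_comm _ _
  have htd1 : k' + 1 ≤ t * d := by
    have h3 : t * d = q * d + d := by rw [htdef]; ring
    omega
  have htd2 : t * d ≤ k' + d := by
    have h3 : t * d = q * d + d := by rw [htdef]; ring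
    omega
  have ht2 : 2 ≤ t := by omega
  have htk : t ≤ k' + 1 := by
    have : q ≤ k' := hq ▸ Nat.div_le_self _ _
    omega
  have hnz : (n : ℤ) = 4 * k' + 4 - d := by omega
  have htd1z : (k' : ℤ) + 1 ≤ t * d := by exact_mod_cast htd1
  have htd2z : (t : ℤ) * d ≤ k' + d := by exact_mod_cast htd2
  have hd1z : (1 : ℤ) ≤ d := by exact_mod_cast hd1
  have hdkz : (d : ℤ) ≤ k' := by exact_mod_cast hdk
  have hA : t * n ≤ (k' + 1) * (4 * t - 1) := by
    zify [show 1 ≤ 4 * t by omega]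
    have hexp : (t : ℤ) * n = 4 * t * k' + 4 * t - t * d := by rw [hnz]; ring
    linarith
  have hB : (k' + 1 + 1) * (4 * t - 1) ≤ (t + 1) * n := by
    zify [show 1 ≤ 4 * t by omega]
    have hexp : ((t : ℤ) + 1) * n = 4 * t * k' + 4 * t + 4 * k' + 4 - t * d - d := by
      rw [hnz]; ring
    have hint : (0 : ℤ) ≤ ((d : ℤ) - 1) * (2 * k' - d) :=
      mul_nonneg (by linarith) (by linarith)
    have key : (d : ℤ) * (d + 2 * t) ≤ d * (2 * k' + 3) := by nlinarith [htd2z, hint]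
    have hP : (d : ℤ) + 2 * t ≤ 2 * k' + 3 := by
      by_contra hcon
      push_neg at hcon
      have h5 : (d : ℤ) * (2 * k' + 3 + 1) ≤ d * (d + 2 * t) :=
        mul_le_mul_of_nonneg_left (by linarith) (by linarith)
      nlinarith [key, h5]
    linarith
  exact my_key_embed n (k' + 1) t ht2 (by omega) htk hA hB
end
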